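/- Let G be a cubic graph with vertex ordering v_1,…,v_n (n ≥ 4) and edge ordering e_1,…,e_m, let p, q, p', q' be positive integers, and let G' be the reduction graph. Define α₁ = n(2pq + q² + 6q + 3(p+q)(n−1)) and α₂ = m(2p'q' + q'² + 2p' + 2(p'+q')(m−1)). Then for every cut [X,Y] of G, the cut [A,B] = f(X,Y) of G' satisfies α₁ + α₂ + 2q'·|E_G(X,Y)| ≤ |E_{G'}(A,B)| ≤ α₁ + α₂ + 2q'·|E_G(X,Y)| + 9n². -/

import Mathlib

/-- The vertices of the reduction graph `G'`: for each `i ∈ [n]` a `(p,q)`-grained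
gadget `H_i` with parts `K'_i` (`vK1`), `K''_i` (`vK2`), `S'_i` (`vS1`), `S''_i` (`vS2`);
for each `j ∈ [m]` a `(p',q')`-grained gadget `E_j` with parts `K'ᵉ_j` (`eK1`),
`K''ᵉ_j` (`eK2`), `S'ᵉ_j` (`eS1`), `S''ᵉ_j` (`eS2`); and for each `j ∈ [m]` four link
vertices `link lr s j`, where `lr = false` selects the smaller endpoint index of the
edge `e_j` and `lr = true` the larger one, and `s` distinguishes `L¹` (`s = false`)
from `L²` (`s = true`). -/
inductive RVert (n m p q p' q' : ℕ) : Type where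
  | vK1 : Fin n → Fin q → RVert n m p q p' q'
  | vK2 : Fin n → Fin q → RVert n m p q p' q'
  | vS1 : Fin n → Fin p → RVert n m p q p' q'
  | vS2 : Fin n → Fin p → RVert n m p q p' q'
  | eK1 : Fin m → Fin q' → RVert n m p q p' q'
  | eK2 : Fin m → Fin q' → RVert n m p q p' q'
  | eS1 : Fin m → Fin p' → RVert n m p q p' q'
  | eS2 : Fin m → Fin p' → RVert n m p q p' q'
  | link : Bool → Bool → Fin m → RVert n m p q p' q'
  deriving DecidableEq

/-- Given the two endpoint functions `ep1 ep2 : Fin m → Fin n` of the ordered edges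
(`ep1 j < ep2 j`), the vertex index associated with the link vertex `link lr s j`. -/
def linkIdx {n m : ℕ} (ep1 ep2 : Fin m → Fin n) (lr : Bool) (j : Fin m) : Fin n :=
  if lr then ep2 j else ep1 j

/-- One-directional description of the adjacencies of the reduction graph `G'`. -/
def radj {n m p q p' q' : ℕ} (ep1 ep2 : Fin m → Fin n) :
    RVert n m p q p' q' → RVert n m p q p' q' → Prop
  | .vK1 i _, .vK1 i' _ => i = i'
  | .vK1 i _, .vK2 i' _ => i = i'
  | .vK2 i _, .vK2 i' _ => i = i'
  | .vK1 i _, .vS1 i' _ => i = i'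
  | .vK2 i _, .vS2 i' _ => i = i'
  | .eK1 j _, .eK1 j' _ => j = j'
  | .eK1 j _, .eK2 j' _ => j = j'
  | .eK2 j _, .eK2 j' _ => j = j'
  | .eK1 j _, .eS1 j' _ => j = j'
  | .eK2 j _, .eS2 j' _ => j = j'
  | .link lr _ j, .vK1 k _ => linkIdx ep1 ep2 lr j < k
  | .link lr _ j, .vK2 k _ => linkIdx ep1 ep2 lr j ≤ k
  | .link lr _ j, .vS1 k _ => linkIdx ep1 ep2 lr j < k
  | .link lr _ j, .vS2 k _ => linkIdx ep1 ep2 lr j < k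
  | .link _ _ j, .eK1 l _ => l ≤ j
  | .link _ _ j, .eK2 l _ => l < j
  | .link lr _ j, .eS1 l _ => l < j ∨ (l = j ∧ lr = false)
  | .link _ _ j, .eS2 l _ => l < j
  | .link lr _ j, .link lr' _ l =>
      (linkIdx ep1 ep2 lr j < linkIdx ep1 ep2 lr' l ∧ l ≤ j) ∨
      (linkIdx ep1 ep2 lr' l < linkIdx ep1 ep2 lr j ∧ j ≤ l) ∨
      (linkIdx ep1 ep2 lr j = linkIdx ep1 ep2 lr' l ∧ j = l)
  | _, _ => False

/-- The reduction graph `G'`. -/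
def reductionGraph (n m p q p' q' : ℕ) (ep1 ep2 : Fin m → Fin n) :
    SimpleGraph (RVert n m p q p' q') where
  Adj u v := u ≠ v ∧ (radj ep1 ep2 u v ∨ radj ep1 ep2 v u)
  symm := ⟨fun u v h => ⟨h.1.symm, h.2.symm⟩⟩
  loopless := ⟨fun u h => h.1 rfl⟩


/-- Size of the cut-set of the cut `[A,B]`. -/
noncomputable def cutSize {V : Type} (G : SimpleGraph V) (A B : Set V) : ℕ :=
  {p : V × V | p.1 ∈ A ∧ p.2 ∈ B ∧ G.Adj p.1 p.2}.ncard

/-- `[A,B]` is a maximum cut of `G`. -/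
def IsMaxCut {V : Type} (G : SimpleGraph V) (A B : Set V) : Prop :=
  A ∪ B = Set.univ ∧ Disjoint A B ∧
    ∀ A' B' : Set V, A' ∪ B' = Set.univ → Disjoint A' B' →
      cutSize G A' B' ≤ cutSize G A B

/-- The part `A` of the cut `f(X,Y)` of the reduction graph associated with the
cut `[X,Y]` of `G` (the part `B` is `cutA ep1 ep2 Y X`). -/
def cutA {n m p q p' q' : ℕ} (ep1 ep2 : Fin m → Fin n) (X Y : Set (Fin n)) :
    Set (RVert n m p q p' q') := fun w =>
  match w with
  | .vK1 i _ => i ∈ X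
  | .vK2 i _ => i ∈ Y
  | .vS1 i _ => i ∈ Y
  | .vS2 i _ => i ∈ X
  | .eK1 j _ => ep1 j ∈ X
  | .eK2 j _ => ep1 j ∈ Y
  | .eS1 j _ => ep1 j ∈ Y
  | .eS2 j _ => ep1 j ∈ X
  | .link lr _ j => linkIdx ep1 ep2 lr j ∈ X


theorem Set.mem_def {α : Type*} {a : α} {s : Set α} : a ∈ s ↔ s a := Iff.rfl

section Aux
open Finset

variable {n m p q p' q' : ℕ}

/-- Proxy type for `RVert`. -/
abbrev RProxy (n m p q p' q' : ℕ) : Type :=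
  (Fin n × Fin q) ⊕ (Fin n × Fin q) ⊕ (Fin n × Fin p) ⊕ (Fin n × Fin p) ⊕
  (Fin m × Fin q') ⊕ (Fin m × Fin q') ⊕ (Fin m × Fin p') ⊕ (Fin m × Fin p') ⊕
  (Bool × Bool × Fin m)

def rvEquiv (n m p q p' q' : ℕ) : RProxy n m p q p' q' ≃ RVert n m p q p' q' where
  toFun x := match x with
    | .inl (i, r) => .vK1 i r
    | .inr (.inl (i, r)) => .vK2 i r
    | .inr (.inr (.inl (i, r))) => .vS1 i r
    | .inr (.inr (.inr (.inl (i, r)))) => .vS2 i r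
    | .inr (.inr (.inr (.inr (.inl (j, r))))) => .eK1 j r
    | .inr (.inr (.inr (.inr (.inr (.inl (j, r)))))) => .eK2 j r
    | .inr (.inr (.inr (.inr (.inr (.inr (.inl (j, r))))))) => .eS1 j r
    | .inr (.inr (.inr (.inr (.inr (.inr (.inr (.inl (j, r)))))))) => .eS2 j r
    | .inr (.inr (.inr (.inr (.inr (.inr (.inr (.inr (lr, s, j)))))))) => .link lr s j
  invFun v := match v with
    | .vK1 i r => .inl (i, r)
    | .vK2 i r => .inr (.inl (i, r))
    | .vS1 i r => .inr (.inr (.inl (i, r)))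
    | .vS2 i r => .inr (.inr (.inr (.inl (i, r))))
    | .eK1 j r => .inr (.inr (.inr (.inr (.inl (j, r)))))
    | .eK2 j r => .inr (.inr (.inr (.inr (.inr (.inl (j, r))))))
    | .eS1 j r => .inr (.inr (.inr (.inr (.inr (.inr (.inl (j, r)))))))
    | .eS2 j r => .inr (.inr (.inr (.inr (.inr (.inr (.inr (.inl (j, r))))))))
    | .link lr s j => .inr (.inr (.inr (.inr (.inr (.inr (.inr (.inr (lr, s, j))))))))
  left_inv x := by
    rcases x with ⟨i, r⟩ | ⟨i, r⟩ | ⟨i, r⟩ | ⟨i, r⟩ | ⟨j, r⟩ | ⟨j, r⟩ | ⟨j, r⟩ | ⟨j, r⟩ |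
      ⟨lr, s, j⟩ <;> rfl
  right_inv v := by cases v <;> rfl

instance : Fintype (RVert n m p q p' q') := Fintype.ofEquiv _ (rvEquiv n m p q p' q')

lemma sum_rvert (f : RVert n m p q p' q' → ℕ) :
    ∑ u, f u =
      ((∑ i, ∑ r, f (.vK1 i r)) + (∑ i, ∑ r, f (.vK2 i r)) +
        (∑ i, ∑ r, f (.vS1 i r)) + (∑ i, ∑ r, f (.vS2 i r))) +
      ((∑ j, ∑ r, f (.eK1 j r)) + (∑ j, ∑ r, f (.eK2 j r)) +
        (∑ j, ∑ r, f (.eS1 j r)) + (∑ j, ∑ r, f (.eS2 j r))) +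
      (∑ lr, ∑ s, ∑ j, f (.link lr s j)) := by
  rw [← Equiv.sum_comp (rvEquiv n m p q p' q') f]
  simp only [Fintype.sum_sum_type, Fintype.sum_prod_type, rvEquiv, Equiv.coe_fn_mk]
  ring

end Aux
section Aux2
open Finset

instance radjDec {n m p q p' q' : ℕ} (ep1 ep2 : Fin m → Fin n) :
    ∀ u v : RVert n m p q p' q', Decidable (radj ep1 ep2 u v) := fun u v => by
  cases u <;> cases v <;> simp only [radj] <;> infer_instance

instance rgAdjDec {n m p q p' q' : ℕ} (ep1 ep2 : Fin m → Fin n) :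
    DecidableRel (reductionGraph n m p q p' q' ep1 ep2).Adj := fun u v =>
  instDecidableAnd

instance cutADec {n m p q p' q' : ℕ} (ep1 ep2 : Fin m → Fin n) (X Y : Set (Fin n))
    [DecidablePred (· ∈ X)] [DecidablePred (· ∈ Y)] :
    DecidablePred (· ∈ cutA (p := p) (q := q) (p' := p') (q' := q') ep1 ep2 X Y) :=
  fun w => match w with
  | .vK1 i _ => (inferInstance : Decidable (i ∈ X))
  | .vK2 i _ => (inferInstance : Decidable (i ∈ Y))
  | .vS1 i _ => (inferInstance : Decidable (i ∈ Y))
  | .vS2 i _ => (inferInstance : Decidable (i ∈ X))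
  | .eK1 j _ => (inferInstance : Decidable (ep1 j ∈ X))
  | .eK2 j _ => (inferInstance : Decidable (ep1 j ∈ Y))
  | .eS1 j _ => (inferInstance : Decidable (ep1 j ∈ Y))
  | .eS2 j _ => (inferInstance : Decidable (ep1 j ∈ X))
  | .link lr _ j => (inferInstance : Decidable (linkIdx ep1 ep2 lr j ∈ X))

lemma rg_adj {n m p q p' q' : ℕ} (ep1 ep2 : Fin m → Fin n)
    (u v : RVert n m p q p' q') :
    (reductionGraph n m p q p' q' ep1 ep2).Adj u v ↔
      u ≠ v ∧ (radj ep1 ep2 u v ∨ radj ep1 ep2 v u) := Iff.rfl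

lemma cutSize_eq_sum {V : Type} [Fintype V] [DecidableEq V] (G : SimpleGraph V)
    (A B : Set V) [DecidablePred (· ∈ A)] [DecidablePred (· ∈ B)]
    [DecidableRel G.Adj] :
    cutSize G A B = ∑ u : V, ∑ v : V, if u ∈ A ∧ v ∈ B ∧ G.Adj u v then 1 else 0 := by
  rw [cutSize, Set.ncard_eq_toFinset_card', Set.toFinset_setOf, Finset.card_filter,
    Fintype.sum_prod_type]

end Aux2
section Aux3
open Finset
open scoped Classical

variable {α γ : Type} [Fintype α] [Fintype γ] [DecidableEq α]

lemma chunkZero (P : α → γ → Prop) [inst : ∀ a g, Decidable (P a g)]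
    (h : ∀ a g, ¬ P a g) :
    ∑ a : α, ∑ g : γ, (if P a g then 1 else 0) = 0 := by
  simp [h]

lemma chunkEq (i : α) (Q S : α → Prop) (P : α → γ → Prop)
    [inst : ∀ a g, Decidable (P a g)]
    (h : ∀ a g, P a g ↔ Q i ∧ S a ∧ i = a) :
    ∑ a : α, ∑ g : γ, (if P a g then 1 else 0) =
      if Q i ∧ S i then Fintype.card γ else 0 := by
  have h2 : ∀ a : α, (∑ g : γ, if P a g then 1 else 0) =
      if i = a then (if Q i ∧ S i then Fintype.card γ else 0) else 0 := by
    intro a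
    by_cases hia : i = a
    · subst hia
      by_cases hq : Q i ∧ S i
      · have : ∀ g : γ, P i g := fun g => (h i g).2 ⟨hq.1, hq.2, rfl⟩
        simp [this, hq]
      · have : ∀ g : γ, ¬ P i g := fun g hP => hq ⟨((h i g).1 hP).1, ((h i g).1 hP).2.1⟩
        simp [this, hq]
    · have : ∀ g : γ, ¬ P a g := fun g hP => hia ((h a g).1 hP).2.2
      simp [this, hia]
  simp only [h2]
  simp [Finset.sum_ite_eq]

lemma chunkCnt (Q : Prop) [Decidable Q] (R : α → Prop) [∀ a, Decidable (R a)]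
    (P : α → γ → Prop) [inst : ∀ a g, Decidable (P a g)]
    (h : ∀ a g, P a g ↔ Q ∧ R a) :
    ∑ a : α, ∑ g : γ, (if P a g then 1 else 0) =
      if Q then Fintype.card γ * (∑ a : α, if R a then 1 else 0) else 0 := by
  by_cases hq : Q
  · have hPR : ∀ a g, P a g ↔ R a := fun a g => by rw [h]; tauto
    have : ∀ a : α, (∑ g : γ, if P a g then 1 else 0) =
        Fintype.card γ * (if R a then 1 else 0) := by
      intro a
      by_cases hr : R a
      · simp [fun g => (hPR a g).2 hr, hr]
      · have hnot : ∀ g, ¬ P a g := fun g hP => hr ((hPR a g).1 hP)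
        rw [Finset.sum_eq_zero fun g _ => if_neg (hnot g), if_neg hr, mul_zero]
    simp only [this, hq, if_pos, ← Finset.mul_sum]
  · have : ∀ a g, ¬ P a g := fun a g hP => hq ((h a g).1 hP).1
    simp [this, hq]

lemma chunkLink {mm : ℕ} (Q : Prop) [Decidable Q] (R : Bool → Fin mm → Prop)
    [∀ lr l, Decidable (R lr l)]
    (P : Bool → Bool → Fin mm → Prop) [inst : ∀ lr s l, Decidable (P lr s l)]
    (h : ∀ lr s l, P lr s l ↔ Q ∧ R lr l) :
    ∑ lr : Bool, ∑ s : Bool, ∑ l : Fin mm, (if P lr s l then 1 else 0) =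
      if Q then 2 * (∑ lr : Bool, ∑ l : Fin mm, if R lr l then 1 else 0) else 0 := by
  by_cases hq : Q
  · have hPR : ∀ lr s l, P lr s l ↔ R lr l := fun lr s l => by rw [h]; tauto
    have : ∀ lr s : Bool, (∑ l : Fin mm, if P lr s l then 1 else 0) =
        ∑ l : Fin mm, if R lr l then 1 else 0 := by
      intro lr s
      refine Finset.sum_congr rfl fun l _ => ?_
      by_cases hr : R lr l
      · rw [if_pos ((hPR lr s l).2 hr), if_pos hr]
      · rw [if_neg (fun hP => hr ((hPR lr s l).1 hP)), if_neg hr]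
    simp only [this, hq, if_pos]
    simp only [Fintype.sum_bool, two_mul]
    omega
  · have : ∀ lr s l, ¬ P lr s l := fun lr s l hP => hq ((h lr s l).1 hP).1
    simp [this, hq]

lemma chunkLL {mm : ℕ} (Q : Prop) [Decidable Q] (R : Bool → Bool → Fin mm → Prop)
    [∀ lr s l, Decidable (R lr s l)]
    (P : Bool → Bool → Fin mm → Prop) [inst : ∀ lr s l, Decidable (P lr s l)]
    (h : ∀ lr s l, P lr s l ↔ Q ∧ R lr s l) :
    ∑ lr : Bool, ∑ s : Bool, ∑ l : Fin mm, (if P lr s l then 1 else 0) =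
      if Q then (∑ lr : Bool, ∑ s : Bool, ∑ l : Fin mm, if R lr s l then 1 else 0)
      else 0 := by
  by_cases hq : Q
  · have hPR : ∀ lr s l, P lr s l ↔ R lr s l := fun lr s l => by rw [h]; tauto
    simp only [hq, if_pos]
    refine Finset.sum_congr rfl fun lr _ => Finset.sum_congr rfl fun s _ =>
      Finset.sum_congr rfl fun l _ => ?_
    by_cases hr : R lr s l
    · rw [if_pos ((hPR lr s l).2 hr), if_pos hr]
    · rw [if_neg (fun hP => hr ((hPR lr s l).1 hP)), if_neg hr]
  · have : ∀ lr s l, ¬ P lr s l := fun lr s l hP => hq ((h lr s l).1 hP).1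
    simp [this, hq]

end Aux3
section Aux4
open Finset

variable {n m : ℕ} (p q p' q' : ℕ) (ep1 ep2 : Fin m → Fin n) (X Y : Set (Fin n))
variable [DecidablePred (· ∈ X)] [DecidablePred (· ∈ Y)]

def cfun (u v : RVert n m p q p' q') : ℕ :=
  if u ∈ cutA ep1 ep2 X Y ∧ v ∈ cutA ep1 ep2 Y X ∧
      (reductionGraph n m p q p' q' ep1 ep2).Adj u v then 1 else 0

def lcnt (Z : Set (Fin n)) [DecidablePred (· ∈ Z)] (P : Bool → Fin m → Prop)
    [∀ lr l, Decidable (P lr l)] : ℕ :=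
  ∑ lr : Bool, ∑ l : Fin m, if linkIdx ep1 ep2 lr l ∈ Z ∧ P lr l then 1 else 0

def vcnt (Z : Set (Fin n)) [DecidablePred (· ∈ Z)] (P : Fin n → Prop)
    [DecidablePred P] : ℕ :=
  ∑ k : Fin n, if k ∈ Z ∧ P k then 1 else 0

def ecnt (Z : Set (Fin n)) [DecidablePred (· ∈ Z)] (P : Fin m → Prop)
    [DecidablePred P] : ℕ :=
  ∑ l : Fin m, if ep1 l ∈ Z ∧ P l then 1 else 0

def cntLL (lr s : Bool) (j : Fin m) : ℕ :=
  ∑ lr' : Bool, ∑ s' : Bool, ∑ l : Fin m,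
    if linkIdx ep1 ep2 lr' l ∈ Y ∧
        (reductionGraph n m p q p' q' ep1 ep2).Adj (.link lr s j) (.link lr' s' l)
    then 1 else 0

variable (hd : Disjoint X Y)
include hd

set_option maxHeartbeats 1000000 in
lemma f_vK1 (i : Fin n) (r : Fin q) :
    ∑ v, cfun p q p' q' ep1 ep2 X Y (RVert.vK1 i r) v = if i ∈ X then q + p + 2 * lcnt ep1 ep2 Y (fun lr' l' => linkIdx ep1 ep2 lr' l' < i) else 0 := by
  simp only [sum_rvert]
  have c1 : (∑ x : Fin n, ∑ y : Fin q, cfun p q p' q' ep1 ep2 X Y (RVert.vK1 i r) (.vK1 x y)) = 0 := by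
    simp only [cfun]
    refine chunkZero _ ?_
    intro a g
    simp only [rg_adj, radj, cutA, Set.mem_def]
    rintro ⟨h1, h2, -, (h4 | h4)⟩ <;> subst h4 <;>
      first
        | exact Set.disjoint_left.mp hd h1 h2
        | exact Set.disjoint_left.mp hd h2 h1
  have c2 : (∑ x : Fin n, ∑ y : Fin q, cfun p q p' q' ep1 ep2 X Y (RVert.vK1 i r) (.vK2 x y)) =
      if i ∈ X then (q : ℕ) else 0 := by
    simp only [cfun]
    refine (chunkEq i (fun z => i ∈ X) (fun a => a ∈ X) _ ?_).trans ?_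
    · intro a g
      simp [rg_adj, radj, cutA, Set.mem_def, eq_comm]
      try tauto
    · simp
  have c3 : (∑ x : Fin n, ∑ y : Fin p, cfun p q p' q' ep1 ep2 X Y (RVert.vK1 i r) (.vS1 x y)) =
      if i ∈ X then (p : ℕ) else 0 := by
    simp only [cfun]
    refine (chunkEq i (fun z => i ∈ X) (fun a => a ∈ X) _ ?_).trans ?_
    · intro a g
      simp [rg_adj, radj, cutA, Set.mem_def, eq_comm]
      try tauto
    · simp
  have c4 : (∑ x : Fin n, ∑ y : Fin p, cfun p q p' q' ep1 ep2 X Y (RVert.vK1 i r) (.vS2 x y)) = 0 := by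
    simp only [cfun]
    refine chunkZero _ ?_
    intro a g
    simp [rg_adj, radj, cutA, Set.mem_def]
  have c5 : (∑ x : Fin m, ∑ y : Fin q', cfun p q p' q' ep1 ep2 X Y (RVert.vK1 i r) (.eK1 x y)) = 0 := by
    simp only [cfun]
    refine chunkZero _ ?_
    intro a g
    simp [rg_adj, radj, cutA, Set.mem_def]
  have c6 : (∑ x : Fin m, ∑ y : Fin q', cfun p q p' q' ep1 ep2 X Y (RVert.vK1 i r) (.eK2 x y)) = 0 := by
    simp only [cfun]
    refine chunkZero _ ?_
    intro a g
    simp [rg_adj, radj, cutA, Set.mem_def]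
  have c7 : (∑ x : Fin m, ∑ y : Fin p', cfun p q p' q' ep1 ep2 X Y (RVert.vK1 i r) (.eS1 x y)) = 0 := by
    simp only [cfun]
    refine chunkZero _ ?_
    intro a g
    simp [rg_adj, radj, cutA, Set.mem_def]
  have c8 : (∑ x : Fin m, ∑ y : Fin p', cfun p q p' q' ep1 ep2 X Y (RVert.vK1 i r) (.eS2 x y)) = 0 := by
    simp only [cfun]
    refine chunkZero _ ?_
    intro a g
    simp [rg_adj, radj, cutA, Set.mem_def]
  have c9 : (∑ x : Bool, ∑ y : Bool, ∑ z : Fin m, cfun p q p' q' ep1 ep2 X Y (RVert.vK1 i r) (.link x y z)) =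
      if i ∈ X then 2 * lcnt ep1 ep2 Y (fun lr' l' => linkIdx ep1 ep2 lr' l' < i) else 0 := by
    simp only [cfun, lcnt]
    refine (chunkLink (i ∈ X) (fun lr' l' => linkIdx ep1 ep2 lr' l' ∈ Y ∧ (linkIdx ep1 ep2 lr' l' < i)) _ ?_).trans ?_
    · intro lr' s' l'
      simp [rg_adj, radj, cutA, Set.mem_def, eq_comm]
      try tauto
    · rfl
  rw [c1, c2, c3, c4, c5, c6, c7, c8, c9]
  by_cases hQ : i ∈ X <;> simp [hQ] <;> try omega

set_option maxHeartbeats 1000000 in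
lemma f_vK2 (i : Fin n) (r : Fin q) :
    ∑ v, cfun p q p' q' ep1 ep2 X Y (RVert.vK2 i r) v = if i ∈ Y then q + p + 2 * lcnt ep1 ep2 Y (fun lr' l' => linkIdx ep1 ep2 lr' l' ≤ i) else 0 := by
  simp only [sum_rvert]
  have c1 : (∑ x : Fin n, ∑ y : Fin q, cfun p q p' q' ep1 ep2 X Y (RVert.vK2 i r) (.vK1 x y)) =
      if i ∈ Y then (q : ℕ) else 0 := by
    simp only [cfun]
    refine (chunkEq i (fun z => i ∈ Y) (fun a => a ∈ Y) _ ?_).trans ?_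
    · intro a g
      simp [rg_adj, radj, cutA, Set.mem_def, eq_comm]
      try tauto
    · simp
  have c2 : (∑ x : Fin n, ∑ y : Fin q, cfun p q p' q' ep1 ep2 X Y (RVert.vK2 i r) (.vK2 x y)) = 0 := by
    simp only [cfun]
    refine chunkZero _ ?_
    intro a g
    simp only [rg_adj, radj, cutA, Set.mem_def]
    rintro ⟨h1, h2, -, (h4 | h4)⟩ <;> subst h4 <;>
      first
        | exact Set.disjoint_left.mp hd h1 h2
        | exact Set.disjoint_left.mp hd h2 h1
  have c3 : (∑ x : Fin n, ∑ y : Fin p, cfun p q p' q' ep1 ep2 X Y (RVert.vK2 i r) (.vS1 x y)) = 0 := by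
    simp only [cfun]
    refine chunkZero _ ?_
    intro a g
    simp [rg_adj, radj, cutA, Set.mem_def]
  have c4 : (∑ x : Fin n, ∑ y : Fin p, cfun p q p' q' ep1 ep2 X Y (RVert.vK2 i r) (.vS2 x y)) =
      if i ∈ Y then (p : ℕ) else 0 := by
    simp only [cfun]
    refine (chunkEq i (fun z => i ∈ Y) (fun a => a ∈ Y) _ ?_).trans ?_
    · intro a g
      simp [rg_adj, radj, cutA, Set.mem_def, eq_comm]
      try tauto
    · simp
  have c5 : (∑ x : Fin m, ∑ y : Fin q', cfun p q p' q' ep1 ep2 X Y (RVert.vK2 i r) (.eK1 x y)) = 0 := by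
    simp only [cfun]
    refine chunkZero _ ?_
    intro a g
    simp [rg_adj, radj, cutA, Set.mem_def]
  have c6 : (∑ x : Fin m, ∑ y : Fin q', cfun p q p' q' ep1 ep2 X Y (RVert.vK2 i r) (.eK2 x y)) = 0 := by
    simp only [cfun]
    refine chunkZero _ ?_
    intro a g
    simp [rg_adj, radj, cutA, Set.mem_def]
  have c7 : (∑ x : Fin m, ∑ y : Fin p', cfun p q p' q' ep1 ep2 X Y (RVert.vK2 i r) (.eS1 x y)) = 0 := by
    simp only [cfun]
    refine chunkZero _ ?_
    intro a g
    simp [rg_adj, radj, cutA, Set.mem_def]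
  have c8 : (∑ x : Fin m, ∑ y : Fin p', cfun p q p' q' ep1 ep2 X Y (RVert.vK2 i r) (.eS2 x y)) = 0 := by
    simp only [cfun]
    refine chunkZero _ ?_
    intro a g
    simp [rg_adj, radj, cutA, Set.mem_def]
  have c9 : (∑ x : Bool, ∑ y : Bool, ∑ z : Fin m, cfun p q p' q' ep1 ep2 X Y (RVert.vK2 i r) (.link x y z)) =
      if i ∈ Y then 2 * lcnt ep1 ep2 Y (fun lr' l' => linkIdx ep1 ep2 lr' l' ≤ i) else 0 := by
    simp only [cfun, lcnt]
    refine (chunkLink (i ∈ Y) (fun lr' l' => linkIdx ep1 ep2 lr' l' ∈ Y ∧ (linkIdx ep1 ep2 lr' l' ≤ i)) _ ?_).trans ?_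
    · intro lr' s' l'
      simp [rg_adj, radj, cutA, Set.mem_def, eq_comm]
      try tauto
    · rfl
  rw [c1, c2, c3, c4, c5, c6, c7, c8, c9]
  by_cases hQ : i ∈ Y <;> simp [hQ] <;> try omega

set_option maxHeartbeats 1000000 in
lemma f_vS1 (i : Fin n) (r : Fin p) :
    ∑ v, cfun p q p' q' ep1 ep2 X Y (RVert.vS1 i r) v = if i ∈ Y then q + 2 * lcnt ep1 ep2 Y (fun lr' l' => linkIdx ep1 ep2 lr' l' < i) else 0 := by
  simp only [sum_rvert]
  have c1 : (∑ x : Fin n, ∑ y : Fin q, cfun p q p' q' ep1 ep2 X Y (RVert.vS1 i r) (.vK1 x y)) =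
      if i ∈ Y then (q : ℕ) else 0 := by
    simp only [cfun]
    refine (chunkEq i (fun z => i ∈ Y) (fun a => a ∈ Y) _ ?_).trans ?_
    · intro a g
      simp [rg_adj, radj, cutA, Set.mem_def, eq_comm]
      try tauto
    · simp
  have c2 : (∑ x : Fin n, ∑ y : Fin q, cfun p q p' q' ep1 ep2 X Y (RVert.vS1 i r) (.vK2 x y)) = 0 := by
    simp only [cfun]
    refine chunkZero _ ?_
    intro a g
    simp [rg_adj, radj, cutA, Set.mem_def]
  have c3 : (∑ x : Fin n, ∑ y : Fin p, cfun p q p' q' ep1 ep2 X Y (RVert.vS1 i r) (.vS1 x y)) = 0 := by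
    simp only [cfun]
    refine chunkZero _ ?_
    intro a g
    simp [rg_adj, radj, cutA, Set.mem_def]
  have c4 : (∑ x : Fin n, ∑ y : Fin p, cfun p q p' q' ep1 ep2 X Y (RVert.vS1 i r) (.vS2 x y)) = 0 := by
    simp only [cfun]
    refine chunkZero _ ?_
    intro a g
    simp [rg_adj, radj, cutA, Set.mem_def]
  have c5 : (∑ x : Fin m, ∑ y : Fin q', cfun p q p' q' ep1 ep2 X Y (RVert.vS1 i r) (.eK1 x y)) = 0 := by
    simp only [cfun]
    refine chunkZero _ ?_
    intro a g
    simp [rg_adj, radj, cutA, Set.mem_def]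
  have c6 : (∑ x : Fin m, ∑ y : Fin q', cfun p q p' q' ep1 ep2 X Y (RVert.vS1 i r) (.eK2 x y)) = 0 := by
    simp only [cfun]
    refine chunkZero _ ?_
    intro a g
    simp [rg_adj, radj, cutA, Set.mem_def]
  have c7 : (∑ x : Fin m, ∑ y : Fin p', cfun p q p' q' ep1 ep2 X Y (RVert.vS1 i r) (.eS1 x y)) = 0 := by
    simp only [cfun]
    refine chunkZero _ ?_
    intro a g
    simp [rg_adj, radj, cutA, Set.mem_def]
  have c8 : (∑ x : Fin m, ∑ y : Fin p', cfun p q p' q' ep1 ep2 X Y (RVert.vS1 i r) (.eS2 x y)) = 0 := by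
    simp only [cfun]
    refine chunkZero _ ?_
    intro a g
    simp [rg_adj, radj, cutA, Set.mem_def]
  have c9 : (∑ x : Bool, ∑ y : Bool, ∑ z : Fin m, cfun p q p' q' ep1 ep2 X Y (RVert.vS1 i r) (.link x y z)) =
      if i ∈ Y then 2 * lcnt ep1 ep2 Y (fun lr' l' => linkIdx ep1 ep2 lr' l' < i) else 0 := by
    simp only [cfun, lcnt]
    refine (chunkLink (i ∈ Y) (fun lr' l' => linkIdx ep1 ep2 lr' l' ∈ Y ∧ (linkIdx ep1 ep2 lr' l' < i)) _ ?_).trans ?_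
    · intro lr' s' l'
      simp [rg_adj, radj, cutA, Set.mem_def, eq_comm]
      try tauto
    · rfl
  rw [c1, c2, c3, c4, c5, c6, c7, c8, c9]
  by_cases hQ : i ∈ Y <;> simp [hQ] <;> try omega

set_option maxHeartbeats 1000000 in
lemma f_vS2 (i : Fin n) (r : Fin p) :
    ∑ v, cfun p q p' q' ep1 ep2 X Y (RVert.vS2 i r) v = if i ∈ X then q + 2 * lcnt ep1 ep2 Y (fun lr' l' => linkIdx ep1 ep2 lr' l' < i) else 0 := by
  simp only [sum_rvert]
  have c1 : (∑ x : Fin n, ∑ y : Fin q, cfun p q p' q' ep1 ep2 X Y (RVert.vS2 i r) (.vK1 x y)) = 0 := by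
    simp only [cfun]
    refine chunkZero _ ?_
    intro a g
    simp [rg_adj, radj, cutA, Set.mem_def]
  have c2 : (∑ x : Fin n, ∑ y : Fin q, cfun p q p' q' ep1 ep2 X Y (RVert.vS2 i r) (.vK2 x y)) =
      if i ∈ X then (q : ℕ) else 0 := by
    simp only [cfun]
    refine (chunkEq i (fun z => i ∈ X) (fun a => a ∈ X) _ ?_).trans ?_
    · intro a g
      simp [rg_adj, radj, cutA, Set.mem_def, eq_comm]
      try tauto
    · simp
  have c3 : (∑ x : Fin n, ∑ y : Fin p, cfun p q p' q' ep1 ep2 X Y (RVert.vS2 i r) (.vS1 x y)) = 0 := by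
    simp only [cfun]
    refine chunkZero _ ?_
    intro a g
    simp [rg_adj, radj, cutA, Set.mem_def]
  have c4 : (∑ x : Fin n, ∑ y : Fin p, cfun p q p' q' ep1 ep2 X Y (RVert.vS2 i r) (.vS2 x y)) = 0 := by
    simp only [cfun]
    refine chunkZero _ ?_
    intro a g
    simp [rg_adj, radj, cutA, Set.mem_def]
  have c5 : (∑ x : Fin m, ∑ y : Fin q', cfun p q p' q' ep1 ep2 X Y (RVert.vS2 i r) (.eK1 x y)) = 0 := by
    simp only [cfun]
    refine chunkZero _ ?_
    intro a g
    simp [rg_adj, radj, cutA, Set.mem_def]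
  have c6 : (∑ x : Fin m, ∑ y : Fin q', cfun p q p' q' ep1 ep2 X Y (RVert.vS2 i r) (.eK2 x y)) = 0 := by
    simp only [cfun]
    refine chunkZero _ ?_
    intro a g
    simp [rg_adj, radj, cutA, Set.mem_def]
  have c7 : (∑ x : Fin m, ∑ y : Fin p', cfun p q p' q' ep1 ep2 X Y (RVert.vS2 i r) (.eS1 x y)) = 0 := by
    simp only [cfun]
    refine chunkZero _ ?_
    intro a g
    simp [rg_adj, radj, cutA, Set.mem_def]
  have c8 : (∑ x : Fin m, ∑ y : Fin p', cfun p q p' q' ep1 ep2 X Y (RVert.vS2 i r) (.eS2 x y)) = 0 := by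
    simp only [cfun]
    refine chunkZero _ ?_
    intro a g
    simp [rg_adj, radj, cutA, Set.mem_def]
  have c9 : (∑ x : Bool, ∑ y : Bool, ∑ z : Fin m, cfun p q p' q' ep1 ep2 X Y (RVert.vS2 i r) (.link x y z)) =
      if i ∈ X then 2 * lcnt ep1 ep2 Y (fun lr' l' => linkIdx ep1 ep2 lr' l' < i) else 0 := by
    simp only [cfun, lcnt]
    refine (chunkLink (i ∈ X) (fun lr' l' => linkIdx ep1 ep2 lr' l' ∈ Y ∧ (linkIdx ep1 ep2 lr' l' < i)) _ ?_).trans ?_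
    · intro lr' s' l'
      simp [rg_adj, radj, cutA, Set.mem_def, eq_comm]
      try tauto
    · rfl
  rw [c1, c2, c3, c4, c5, c6, c7, c8, c9]
  by_cases hQ : i ∈ X <;> simp [hQ] <;> try omega

set_option maxHeartbeats 1000000 in
lemma f_eK1 (l : Fin m) (r : Fin q') :
    ∑ v, cfun p q p' q' ep1 ep2 X Y (RVert.eK1 l r) v = if ep1 l ∈ X then q' + p' + 2 * lcnt ep1 ep2 Y (fun lr' l' => l ≤ l') else 0 := by
  simp only [sum_rvert]
  have c1 : (∑ x : Fin n, ∑ y : Fin q, cfun p q p' q' ep1 ep2 X Y (RVert.eK1 l r) (.vK1 x y)) = 0 := by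
    simp only [cfun]
    refine chunkZero _ ?_
    intro a g
    simp [rg_adj, radj, cutA, Set.mem_def]
  have c2 : (∑ x : Fin n, ∑ y : Fin q, cfun p q p' q' ep1 ep2 X Y (RVert.eK1 l r) (.vK2 x y)) = 0 := by
    simp only [cfun]
    refine chunkZero _ ?_
    intro a g
    simp [rg_adj, radj, cutA, Set.mem_def]
  have c3 : (∑ x : Fin n, ∑ y : Fin p, cfun p q p' q' ep1 ep2 X Y (RVert.eK1 l r) (.vS1 x y)) = 0 := by
    simp only [cfun]
    refine chunkZero _ ?_
    intro a g
    simp [rg_adj, radj, cutA, Set.mem_def]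
  have c4 : (∑ x : Fin n, ∑ y : Fin p, cfun p q p' q' ep1 ep2 X Y (RVert.eK1 l r) (.vS2 x y)) = 0 := by
    simp only [cfun]
    refine chunkZero _ ?_
    intro a g
    simp [rg_adj, radj, cutA, Set.mem_def]
  have c5 : (∑ x : Fin m, ∑ y : Fin q', cfun p q p' q' ep1 ep2 X Y (RVert.eK1 l r) (.eK1 x y)) = 0 := by
    simp only [cfun]
    refine chunkZero _ ?_
    intro a g
    simp only [rg_adj, radj, cutA, Set.mem_def]
    rintro ⟨h1, h2, -, (h4 | h4)⟩ <;> subst h4 <;>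
      first
        | exact Set.disjoint_left.mp hd h1 h2
        | exact Set.disjoint_left.mp hd h2 h1
  have c6 : (∑ x : Fin m, ∑ y : Fin q', cfun p q p' q' ep1 ep2 X Y (RVert.eK1 l r) (.eK2 x y)) =
      if ep1 l ∈ X then (q' : ℕ) else 0 := by
    simp only [cfun]
    refine (chunkEq l (fun z => ep1 l ∈ X) (fun a => ep1 a ∈ X) _ ?_).trans ?_
    · intro a g
      simp [rg_adj, radj, cutA, Set.mem_def, eq_comm]
      try tauto
    · simp
  have c7 : (∑ x : Fin m, ∑ y : Fin p', cfun p q p' q' ep1 ep2 X Y (RVert.eK1 l r) (.eS1 x y)) =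
      if ep1 l ∈ X then (p' : ℕ) else 0 := by
    simp only [cfun]
    refine (chunkEq l (fun z => ep1 l ∈ X) (fun a => ep1 a ∈ X) _ ?_).trans ?_
    · intro a g
      simp [rg_adj, radj, cutA, Set.mem_def, eq_comm]
      try tauto
    · simp
  have c8 : (∑ x : Fin m, ∑ y : Fin p', cfun p q p' q' ep1 ep2 X Y (RVert.eK1 l r) (.eS2 x y)) = 0 := by
    simp only [cfun]
    refine chunkZero _ ?_
    intro a g
    simp [rg_adj, radj, cutA, Set.mem_def]
  have c9 : (∑ x : Bool, ∑ y : Bool, ∑ z : Fin m, cfun p q p' q' ep1 ep2 X Y (RVert.eK1 l r) (.link x y z)) =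
      if ep1 l ∈ X then 2 * lcnt ep1 ep2 Y (fun lr' l' => l ≤ l') else 0 := by
    simp only [cfun, lcnt]
    refine (chunkLink (ep1 l ∈ X) (fun lr' l' => linkIdx ep1 ep2 lr' l' ∈ Y ∧ (l ≤ l')) _ ?_).trans ?_
    · intro lr' s' l'
      simp [rg_adj, radj, cutA, Set.mem_def, eq_comm]
      try tauto
    · rfl
  rw [c1, c2, c3, c4, c5, c6, c7, c8, c9]
  by_cases hQ : ep1 l ∈ X <;> simp [hQ] <;> try omega

set_option maxHeartbeats 1000000 in
lemma f_eK2 (l : Fin m) (r : Fin q') :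
    ∑ v, cfun p q p' q' ep1 ep2 X Y (RVert.eK2 l r) v = if ep1 l ∈ Y then q' + p' + 2 * lcnt ep1 ep2 Y (fun lr' l' => l < l') else 0 := by
  simp only [sum_rvert]
  have c1 : (∑ x : Fin n, ∑ y : Fin q, cfun p q p' q' ep1 ep2 X Y (RVert.eK2 l r) (.vK1 x y)) = 0 := by
    simp only [cfun]
    refine chunkZero _ ?_
    intro a g
    simp [rg_adj, radj, cutA, Set.mem_def]
  have c2 : (∑ x : Fin n, ∑ y : Fin q, cfun p q p' q' ep1 ep2 X Y (RVert.eK2 l r) (.vK2 x y)) = 0 := by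
    simp only [cfun]
    refine chunkZero _ ?_
    intro a g
    simp [rg_adj, radj, cutA, Set.mem_def]
  have c3 : (∑ x : Fin n, ∑ y : Fin p, cfun p q p' q' ep1 ep2 X Y (RVert.eK2 l r) (.vS1 x y)) = 0 := by
    simp only [cfun]
    refine chunkZero _ ?_
    intro a g
    simp [rg_adj, radj, cutA, Set.mem_def]
  have c4 : (∑ x : Fin n, ∑ y : Fin p, cfun p q p' q' ep1 ep2 X Y (RVert.eK2 l r) (.vS2 x y)) = 0 := by
    simp only [cfun]
    refine chunkZero _ ?_
    intro a g
    simp [rg_adj, radj, cutA, Set.mem_def]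
  have c5 : (∑ x : Fin m, ∑ y : Fin q', cfun p q p' q' ep1 ep2 X Y (RVert.eK2 l r) (.eK1 x y)) =
      if ep1 l ∈ Y then (q' : ℕ) else 0 := by
    simp only [cfun]
    refine (chunkEq l (fun z => ep1 l ∈ Y) (fun a => ep1 a ∈ Y) _ ?_).trans ?_
    · intro a g
      simp [rg_adj, radj, cutA, Set.mem_def, eq_comm]
      try tauto
    · simp
  have c6 : (∑ x : Fin m, ∑ y : Fin q', cfun p q p' q' ep1 ep2 X Y (RVert.eK2 l r) (.eK2 x y)) = 0 := by
    simp only [cfun]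
    refine chunkZero _ ?_
    intro a g
    simp only [rg_adj, radj, cutA, Set.mem_def]
    rintro ⟨h1, h2, -, (h4 | h4)⟩ <;> subst h4 <;>
      first
        | exact Set.disjoint_left.mp hd h1 h2
        | exact Set.disjoint_left.mp hd h2 h1
  have c7 : (∑ x : Fin m, ∑ y : Fin p', cfun p q p' q' ep1 ep2 X Y (RVert.eK2 l r) (.eS1 x y)) = 0 := by
    simp only [cfun]
    refine chunkZero _ ?_
    intro a g
    simp [rg_adj, radj, cutA, Set.mem_def]
  have c8 : (∑ x : Fin m, ∑ y : Fin p', cfun p q p' q' ep1 ep2 X Y (RVert.eK2 l r) (.eS2 x y)) =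
      if ep1 l ∈ Y then (p' : ℕ) else 0 := by
    simp only [cfun]
    refine (chunkEq l (fun z => ep1 l ∈ Y) (fun a => ep1 a ∈ Y) _ ?_).trans ?_
    · intro a g
      simp [rg_adj, radj, cutA, Set.mem_def, eq_comm]
      try tauto
    · simp
  have c9 : (∑ x : Bool, ∑ y : Bool, ∑ z : Fin m, cfun p q p' q' ep1 ep2 X Y (RVert.eK2 l r) (.link x y z)) =
      if ep1 l ∈ Y then 2 * lcnt ep1 ep2 Y (fun lr' l' => l < l') else 0 := by
    simp only [cfun, lcnt]
    refine (chunkLink (ep1 l ∈ Y) (fun lr' l' => linkIdx ep1 ep2 lr' l' ∈ Y ∧ (l < l')) _ ?_).trans ?_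
    · intro lr' s' l'
      simp [rg_adj, radj, cutA, Set.mem_def, eq_comm]
      try tauto
    · rfl
  rw [c1, c2, c3, c4, c5, c6, c7, c8, c9]
  by_cases hQ : ep1 l ∈ Y <;> simp [hQ] <;> try omega

set_option maxHeartbeats 1000000 in
lemma f_eS1 (l : Fin m) (r : Fin p') :
    ∑ v, cfun p q p' q' ep1 ep2 X Y (RVert.eS1 l r) v = if ep1 l ∈ Y then q' + 2 * lcnt ep1 ep2 Y (fun lr' l' => l < l' ∨ (l = l' ∧ lr' = false)) else 0 := by
  simp only [sum_rvert]
  have c1 : (∑ x : Fin n, ∑ y : Fin q, cfun p q p' q' ep1 ep2 X Y (RVert.eS1 l r) (.vK1 x y)) = 0 := by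
    simp only [cfun]
    refine chunkZero _ ?_
    intro a g
    simp [rg_adj, radj, cutA, Set.mem_def]
  have c2 : (∑ x : Fin n, ∑ y : Fin q, cfun p q p' q' ep1 ep2 X Y (RVert.eS1 l r) (.vK2 x y)) = 0 := by
    simp only [cfun]
    refine chunkZero _ ?_
    intro a g
    simp [rg_adj, radj, cutA, Set.mem_def]
  have c3 : (∑ x : Fin n, ∑ y : Fin p, cfun p q p' q' ep1 ep2 X Y (RVert.eS1 l r) (.vS1 x y)) = 0 := by
    simp only [cfun]
    refine chunkZero _ ?_
    intro a g
    simp [rg_adj, radj, cutA, Set.mem_def]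
  have c4 : (∑ x : Fin n, ∑ y : Fin p, cfun p q p' q' ep1 ep2 X Y (RVert.eS1 l r) (.vS2 x y)) = 0 := by
    simp only [cfun]
    refine chunkZero _ ?_
    intro a g
    simp [rg_adj, radj, cutA, Set.mem_def]
  have c5 : (∑ x : Fin m, ∑ y : Fin q', cfun p q p' q' ep1 ep2 X Y (RVert.eS1 l r) (.eK1 x y)) =
      if ep1 l ∈ Y then (q' : ℕ) else 0 := by
    simp only [cfun]
    refine (chunkEq l (fun z => ep1 l ∈ Y) (fun a => ep1 a ∈ Y) _ ?_).trans ?_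
    · intro a g
      simp [rg_adj, radj, cutA, Set.mem_def, eq_comm]
      try tauto
    · simp
  have c6 : (∑ x : Fin m, ∑ y : Fin q', cfun p q p' q' ep1 ep2 X Y (RVert.eS1 l r) (.eK2 x y)) = 0 := by
    simp only [cfun]
    refine chunkZero _ ?_
    intro a g
    simp [rg_adj, radj, cutA, Set.mem_def]
  have c7 : (∑ x : Fin m, ∑ y : Fin p', cfun p q p' q' ep1 ep2 X Y (RVert.eS1 l r) (.eS1 x y)) = 0 := by
    simp only [cfun]
    refine chunkZero _ ?_
    intro a g
    simp [rg_adj, radj, cutA, Set.mem_def]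
  have c8 : (∑ x : Fin m, ∑ y : Fin p', cfun p q p' q' ep1 ep2 X Y (RVert.eS1 l r) (.eS2 x y)) = 0 := by
    simp only [cfun]
    refine chunkZero _ ?_
    intro a g
    simp [rg_adj, radj, cutA, Set.mem_def]
  have c9 : (∑ x : Bool, ∑ y : Bool, ∑ z : Fin m, cfun p q p' q' ep1 ep2 X Y (RVert.eS1 l r) (.link x y z)) =
      if ep1 l ∈ Y then 2 * lcnt ep1 ep2 Y (fun lr' l' => l < l' ∨ (l = l' ∧ lr' = false)) else 0 := by
    simp only [cfun, lcnt]
    refine (chunkLink (ep1 l ∈ Y) (fun lr' l' => linkIdx ep1 ep2 lr' l' ∈ Y ∧ (l < l' ∨ (l = l' ∧ lr' = false))) _ ?_).trans ?_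
    · intro lr' s' l'
      simp [rg_adj, radj, cutA, Set.mem_def, eq_comm]
      try tauto
    · rfl
  rw [c1, c2, c3, c4, c5, c6, c7, c8, c9]
  by_cases hQ : ep1 l ∈ Y <;> simp [hQ] <;> try omega

set_option maxHeartbeats 1000000 in
lemma f_eS2 (l : Fin m) (r : Fin p') :
    ∑ v, cfun p q p' q' ep1 ep2 X Y (RVert.eS2 l r) v = if ep1 l ∈ X then q' + 2 * lcnt ep1 ep2 Y (fun lr' l' => l < l') else 0 := by
  simp only [sum_rvert]
  have c1 : (∑ x : Fin n, ∑ y : Fin q, cfun p q p' q' ep1 ep2 X Y (RVert.eS2 l r) (.vK1 x y)) = 0 := by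
    simp only [cfun]
    refine chunkZero _ ?_
    intro a g
    simp [rg_adj, radj, cutA, Set.mem_def]
  have c2 : (∑ x : Fin n, ∑ y : Fin q, cfun p q p' q' ep1 ep2 X Y (RVert.eS2 l r) (.vK2 x y)) = 0 := by
    simp only [cfun]
    refine chunkZero _ ?_
    intro a g
    simp [rg_adj, radj, cutA, Set.mem_def]
  have c3 : (∑ x : Fin n, ∑ y : Fin p, cfun p q p' q' ep1 ep2 X Y (RVert.eS2 l r) (.vS1 x y)) = 0 := by
    simp only [cfun]
    refine chunkZero _ ?_
    intro a g
    simp [rg_adj, radj, cutA, Set.mem_def]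
  have c4 : (∑ x : Fin n, ∑ y : Fin p, cfun p q p' q' ep1 ep2 X Y (RVert.eS2 l r) (.vS2 x y)) = 0 := by
    simp only [cfun]
    refine chunkZero _ ?_
    intro a g
    simp [rg_adj, radj, cutA, Set.mem_def]
  have c5 : (∑ x : Fin m, ∑ y : Fin q', cfun p q p' q' ep1 ep2 X Y (RVert.eS2 l r) (.eK1 x y)) = 0 := by
    simp only [cfun]
    refine chunkZero _ ?_
    intro a g
    simp [rg_adj, radj, cutA, Set.mem_def]
  have c6 : (∑ x : Fin m, ∑ y : Fin q', cfun p q p' q' ep1 ep2 X Y (RVert.eS2 l r) (.eK2 x y)) =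
      if ep1 l ∈ X then (q' : ℕ) else 0 := by
    simp only [cfun]
    refine (chunkEq l (fun z => ep1 l ∈ X) (fun a => ep1 a ∈ X) _ ?_).trans ?_
    · intro a g
      simp [rg_adj, radj, cutA, Set.mem_def, eq_comm]
      try tauto
    · simp
  have c7 : (∑ x : Fin m, ∑ y : Fin p', cfun p q p' q' ep1 ep2 X Y (RVert.eS2 l r) (.eS1 x y)) = 0 := by
    simp only [cfun]
    refine chunkZero _ ?_
    intro a g
    simp [rg_adj, radj, cutA, Set.mem_def]
  have c8 : (∑ x : Fin m, ∑ y : Fin p', cfun p q p' q' ep1 ep2 X Y (RVert.eS2 l r) (.eS2 x y)) = 0 := by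
    simp only [cfun]
    refine chunkZero _ ?_
    intro a g
    simp [rg_adj, radj, cutA, Set.mem_def]
  have c9 : (∑ x : Bool, ∑ y : Bool, ∑ z : Fin m, cfun p q p' q' ep1 ep2 X Y (RVert.eS2 l r) (.link x y z)) =
      if ep1 l ∈ X then 2 * lcnt ep1 ep2 Y (fun lr' l' => l < l') else 0 := by
    simp only [cfun, lcnt]
    refine (chunkLink (ep1 l ∈ X) (fun lr' l' => linkIdx ep1 ep2 lr' l' ∈ Y ∧ (l < l')) _ ?_).trans ?_
    · intro lr' s' l'
      simp [rg_adj, radj, cutA, Set.mem_def, eq_comm]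
      try tauto
    · rfl
  rw [c1, c2, c3, c4, c5, c6, c7, c8, c9]
  by_cases hQ : ep1 l ∈ X <;> simp [hQ] <;> try omega

set_option maxHeartbeats 1000000 in
lemma f_link (lr s : Bool) (j : Fin m) :
    ∑ v, cfun p q p' q' ep1 ep2 X Y (RVert.link lr s j) v = if linkIdx ep1 ep2 lr j ∈ X then q * vcnt Y (fun k => linkIdx ep1 ep2 lr j < k) + q * vcnt X (fun k => linkIdx ep1 ep2 lr j ≤ k) +
        p * vcnt X (fun k => linkIdx ep1 ep2 lr j < k) + p * vcnt Y (fun k => linkIdx ep1 ep2 lr j < k) +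
        q' * ecnt ep1 Y (fun l => l ≤ j) + q' * ecnt ep1 X (fun l => l < j) +
        p' * ecnt ep1 X (fun l => l < j ∨ (l = j ∧ lr = false)) +
        p' * ecnt ep1 Y (fun l => l < j) + cntLL p q p' q' ep1 ep2 Y lr s j else 0 := by
  simp only [sum_rvert]
  have c1 : (∑ x : Fin n, ∑ y : Fin q, cfun p q p' q' ep1 ep2 X Y (RVert.link lr s j) (.vK1 x y)) =
      if linkIdx ep1 ep2 lr j ∈ X then Fintype.card (Fin q) * (vcnt Y (fun k => linkIdx ep1 ep2 lr j < k)) else 0 := by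
    simp only [cfun, vcnt, ecnt]
    refine (chunkCnt (linkIdx ep1 ep2 lr j ∈ X) (fun a => a ∈ Y ∧ linkIdx ep1 ep2 lr j < a) _ ?_).trans ?_
    · intro a g
      simp [rg_adj, radj, cutA, Set.mem_def, eq_comm]
      try tauto
    · rfl
  have c2 : (∑ x : Fin n, ∑ y : Fin q, cfun p q p' q' ep1 ep2 X Y (RVert.link lr s j) (.vK2 x y)) =
      if linkIdx ep1 ep2 lr j ∈ X then Fintype.card (Fin q) * (vcnt X (fun k => linkIdx ep1 ep2 lr j ≤ k)) else 0 := by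
    simp only [cfun, vcnt, ecnt]
    refine (chunkCnt (linkIdx ep1 ep2 lr j ∈ X) (fun a => a ∈ X ∧ linkIdx ep1 ep2 lr j ≤ a) _ ?_).trans ?_
    · intro a g
      simp [rg_adj, radj, cutA, Set.mem_def, eq_comm]
      try tauto
    · rfl
  have c3 : (∑ x : Fin n, ∑ y : Fin p, cfun p q p' q' ep1 ep2 X Y (RVert.link lr s j) (.vS1 x y)) =
      if linkIdx ep1 ep2 lr j ∈ X then Fintype.card (Fin p) * (vcnt X (fun k => linkIdx ep1 ep2 lr j < k)) else 0 := by
    simp only [cfun, vcnt, ecnt]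
    refine (chunkCnt (linkIdx ep1 ep2 lr j ∈ X) (fun a => a ∈ X ∧ linkIdx ep1 ep2 lr j < a) _ ?_).trans ?_
    · intro a g
      simp [rg_adj, radj, cutA, Set.mem_def, eq_comm]
      try tauto
    · rfl
  have c4 : (∑ x : Fin n, ∑ y : Fin p, cfun p q p' q' ep1 ep2 X Y (RVert.link lr s j) (.vS2 x y)) =
      if linkIdx ep1 ep2 lr j ∈ X then Fintype.card (Fin p) * (vcnt Y (fun k => linkIdx ep1 ep2 lr j < k)) else 0 := by
    simp only [cfun, vcnt, ecnt]
    refine (chunkCnt (linkIdx ep1 ep2 lr j ∈ X) (fun a => a ∈ Y ∧ linkIdx ep1 ep2 lr j < a) _ ?_).trans ?_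
    · intro a g
      simp [rg_adj, radj, cutA, Set.mem_def, eq_comm]
      try tauto
    · rfl
  have c5 : (∑ x : Fin m, ∑ y : Fin q', cfun p q p' q' ep1 ep2 X Y (RVert.link lr s j) (.eK1 x y)) =
      if linkIdx ep1 ep2 lr j ∈ X then Fintype.card (Fin q') * (ecnt ep1 Y (fun l => l ≤ j)) else 0 := by
    simp only [cfun, vcnt, ecnt]
    refine (chunkCnt (linkIdx ep1 ep2 lr j ∈ X) (fun a => ep1 a ∈ Y ∧ a ≤ j) _ ?_).trans ?_
    · intro a g
      simp [rg_adj, radj, cutA, Set.mem_def, eq_comm]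
      try tauto
    · rfl
  have c6 : (∑ x : Fin m, ∑ y : Fin q', cfun p q p' q' ep1 ep2 X Y (RVert.link lr s j) (.eK2 x y)) =
      if linkIdx ep1 ep2 lr j ∈ X then Fintype.card (Fin q') * (ecnt ep1 X (fun l => l < j)) else 0 := by
    simp only [cfun, vcnt, ecnt]
    refine (chunkCnt (linkIdx ep1 ep2 lr j ∈ X) (fun a => ep1 a ∈ X ∧ a < j) _ ?_).trans ?_
    · intro a g
      simp [rg_adj, radj, cutA, Set.mem_def, eq_comm]
      try tauto
    · rfl
  have c7 : (∑ x : Fin m, ∑ y : Fin p', cfun p q p' q' ep1 ep2 X Y (RVert.link lr s j) (.eS1 x y)) =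
      if linkIdx ep1 ep2 lr j ∈ X then Fintype.card (Fin p') * (ecnt ep1 X (fun l => l < j ∨ (l = j ∧ lr = false))) else 0 := by
    simp only [cfun, vcnt, ecnt]
    refine (chunkCnt (linkIdx ep1 ep2 lr j ∈ X) (fun a => ep1 a ∈ X ∧ (a < j ∨ (a = j ∧ lr = false))) _ ?_).trans ?_
    · intro a g
      simp [rg_adj, radj, cutA, Set.mem_def, eq_comm]
      try tauto
    · rfl
  have c8 : (∑ x : Fin m, ∑ y : Fin p', cfun p q p' q' ep1 ep2 X Y (RVert.link lr s j) (.eS2 x y)) =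
      if linkIdx ep1 ep2 lr j ∈ X then Fintype.card (Fin p') * (ecnt ep1 Y (fun l => l < j)) else 0 := by
    simp only [cfun, vcnt, ecnt]
    refine (chunkCnt (linkIdx ep1 ep2 lr j ∈ X) (fun a => ep1 a ∈ Y ∧ a < j) _ ?_).trans ?_
    · intro a g
      simp [rg_adj, radj, cutA, Set.mem_def, eq_comm]
      try tauto
    · rfl
  have c9 : (∑ x : Bool, ∑ y : Bool, ∑ z : Fin m, cfun p q p' q' ep1 ep2 X Y (RVert.link lr s j) (.link x y z)) =
      if linkIdx ep1 ep2 lr j ∈ X then cntLL p q p' q' ep1 ep2 Y lr s j else 0 := by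
    simp only [cfun, cntLL]
    exact chunkLL _ _ _ (fun lr' s' l' => Iff.rfl)
  rw [c1, c2, c3, c4, c5, c6, c7, c8, c9]
  by_cases hQ : linkIdx ep1 ep2 lr j ∈ X <;> simp [hQ] <;> try omega


end Aux4
section Aux5
open Finset

variable {n m : ℕ} (p q p' q' : ℕ) (ep1 ep2 : Fin m → Fin n) (X Y : Set (Fin n))
variable [DecidablePred (· ∈ X)] [DecidablePred (· ∈ Y)]

lemma sum_fin_const (t c : ℕ) : ∑ _x : Fin t, c = t * c := by
  simp [Finset.sum_const, mul_comm]

lemma sum_shape {α : Type} [Fintype α] (P : α → Prop) [DecidablePred P]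
    (c1 c2 : ℕ) (L : α → ℕ) :
    (∑ a, if P a then c1 + c2 * L a else 0) =
      c1 * (∑ a, if P a then 1 else 0) + c2 * (∑ a, if P a then L a else 0) := by
  rw [Finset.mul_sum, Finset.mul_sum, ← Finset.sum_add_distrib]
  refine Finset.sum_congr rfl fun a _ => ?_
  split <;> simp

/-- vertex-side count atoms -/
def cardV {n : ℕ} (W : Set (Fin n)) [DecidablePred (· ∈ W)] : ℕ :=
  ∑ i : Fin n, if i ∈ W then 1 else 0

def cardE {n m : ℕ} (ep1 : Fin m → Fin n) (W : Set (Fin n))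
    [DecidablePred (· ∈ W)] : ℕ :=
  ∑ l : Fin m, if ep1 l ∈ W then 1 else 0

def LV {n m : ℕ} (ep1 ep2 : Fin m → Fin n) (W Z : Set (Fin n))
    [DecidablePred (· ∈ W)] [DecidablePred (· ∈ Z)]
    (rel : Fin n → Fin n → Prop) [∀ a b, Decidable (rel a b)] : ℕ :=
  ∑ i : Fin n, if i ∈ W then
    lcnt ep1 ep2 Z (fun lr' l' => rel (linkIdx ep1 ep2 lr' l') i) else 0

def LEc {n m : ℕ} (ep1 ep2 : Fin m → Fin n) (W Z : Set (Fin n))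
    [DecidablePred (· ∈ W)] [DecidablePred (· ∈ Z)]
    (P : Fin m → Bool → Fin m → Prop) [∀ l lr j, Decidable (P l lr j)] : ℕ :=
  ∑ l : Fin m, if ep1 l ∈ W then
    lcnt ep1 ep2 Z (fun lr' l' => P l lr' l') else 0

def GV {n m : ℕ} (ep1 ep2 : Fin m → Fin n) (W Z : Set (Fin n))
    [DecidablePred (· ∈ W)] [DecidablePred (· ∈ Z)]
    (rel : Fin n → Fin n → Prop) [∀ a b, Decidable (rel a b)] : ℕ :=
  ∑ lr : Bool, ∑ j : Fin m, if linkIdx ep1 ep2 lr j ∈ W then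
    vcnt Z (fun k => rel (linkIdx ep1 ep2 lr j) k) else 0

def GE {n m : ℕ} (ep1 ep2 : Fin m → Fin n) (W Z : Set (Fin n))
    [DecidablePred (· ∈ W)] [DecidablePred (· ∈ Z)]
    (P : Bool → Fin m → Fin m → Prop) [∀ lr j l, Decidable (P lr j l)] : ℕ :=
  ∑ lr : Bool, ∑ j : Fin m, if linkIdx ep1 ep2 lr j ∈ W then
    ecnt ep1 Z (fun l => P lr j l) else 0

def LLS {n m : ℕ} (p q p' q' : ℕ) (ep1 ep2 : Fin m → Fin n) (X Y : Set (Fin n))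
    [DecidablePred (· ∈ X)] [DecidablePred (· ∈ Y)] : ℕ :=
  ∑ lr : Bool, ∑ s : Bool, ∑ j : Fin m, if linkIdx ep1 ep2 lr j ∈ X then
    cntLL p q p' q' ep1 ep2 Y lr s j else 0

lemma g_gadget {α : Type} [Fintype α] (t : ℕ) (P : α → Prop) [DecidablePred P]
    (c1 c2 : ℕ) (L : α → ℕ) :
    (∑ a, ∑ _r : Fin t, if P a then c1 + c2 * L a else 0) =
      t * (c1 * (∑ a, if P a then 1 else 0) + c2 * (∑ a, if P a then L a else 0)) := by
  have h : ∀ a, (∑ _r : Fin t, if P a then c1 + c2 * L a else 0) =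
      t * (if P a then c1 + c2 * L a else 0) := fun a => sum_fin_const t _
  simp only [h]
  rw [← Finset.mul_sum, sum_shape]

lemma triple_pull (c : ℕ) (Q : Bool → Fin m → Prop) [∀ lr j, Decidable (Q lr j)]
    (L : Bool → Fin m → ℕ) :
    (∑ lr : Bool, ∑ _s : Bool, ∑ j, if Q lr j then c * L lr j else 0) =
      2 * (c * ∑ lr : Bool, ∑ j, (if Q lr j then L lr j else 0)) := by
  have h : ∀ lr j, (if Q lr j then c * L lr j else 0) =
      c * (if Q lr j then L lr j else 0) := by
    intro lr j; split <;> simp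
  simp only [h, ← Finset.mul_sum, Fintype.sum_bool]
  ring

end Aux5
section Aux6
open Finset

variable {n m : ℕ}

lemma fiber_sum (f : Fin m → Fin n) (F : Fin n → ℕ) :
    ∑ l, F (f l) = ∑ a, (∑ l, if f l = a then 1 else 0) * F a := by
  have h : ∀ l, F (f l) = ∑ a, if f l = a then F a else 0 := fun l => by
    rw [Finset.sum_ite_eq]; simp
  simp only [h]
  rw [Finset.sum_comm]
  refine Finset.sum_congr rfl fun a _ => ?_
  rw [Finset.sum_mul]
  refine Finset.sum_congr rfl fun l _ => ?_
  split <;> simp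

variable (ep1 ep2 : Fin m → Fin n) (G : SimpleGraph (Fin n))

lemma deg_eq (hcubic : ∀ v : Fin n, (G.neighborSet v).ncard = 3)
    (hlt : ∀ j, ep1 j < ep2 j)
    (hedges : ∀ u v : Fin n,
      G.Adj u v ↔ ∃ j, (ep1 j = u ∧ ep2 j = v) ∨ (ep1 j = v ∧ ep2 j = u))
    (hinj : Function.Injective fun j => (ep1 j, ep2 j)) (a : Fin n) :
    (∑ l, if ep1 l = a then 1 else 0) + (∑ l, if ep2 l = a then 1 else 0) = 3 := by
  classical
  have h1 : (∑ l, if ep1 l = a then (1 : ℕ) else 0) =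
      (univ.filter fun l => ep1 l = a).card := by simp [Finset.sum_boole]
  have h2 : (∑ l, if ep2 l = a then (1 : ℕ) else 0) =
      (univ.filter fun l => ep2 l = a).card := by simp [Finset.sum_boole]
  rw [h1, h2]
  have hdisj : Disjoint (univ.filter fun l => ep1 l = a)
      (univ.filter fun l => ep2 l = a) := by
    rw [Finset.disjoint_left]
    intro l hl1 hl2
    simp only [Finset.mem_filter] at hl1 hl2
    have := hlt l
    rw [hl1.2, hl2.2] at this
    exact lt_irrefl a this
  rw [← Finset.card_union_of_disjoint hdisj, ← Finset.filter_or]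
  have hc := hcubic a
  rw [Set.ncard_eq_toFinset_card'] at hc
  rw [← hc]
  apply Finset.card_bij (fun l _ => if ep1 l = a then ep2 l else ep1 l)
  · intro l hl
    simp only [Finset.mem_filter, Finset.mem_univ, true_and] at hl
    simp only [Set.mem_toFinset, SimpleGraph.mem_neighborSet]
    split
    · next h => exact (hedges a (ep2 l)).2 ⟨l, Or.inl ⟨h, rfl⟩⟩
    · next h =>
      rcases hl with h' | h'
      · exact absurd h' h
      · exact (hedges a (ep1 l)).2 ⟨l, Or.inr ⟨rfl, h'⟩⟩
  · intro l1 hl1 l2 hl2 heq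
    simp only [Finset.mem_filter, Finset.mem_univ, true_and] at hl1 hl2
    by_cases e1 : ep1 l1 = a <;> by_cases e2 : ep1 l2 = a <;>
      simp only [e1, e2, if_pos, if_neg, if_true, if_false] at heq
    · exact hinj (Prod.ext (e1.trans e2.symm) heq)
    · have h2a : ep2 l2 = a := hl2.resolve_left e2
      have t1 : a < ep1 l2 := by rw [← e1, ← heq]; exact hlt l1
      have t2 : ep1 l2 < a := by rw [← h2a]; exact hlt l2
      exact absurd (t1.trans t2) (lt_irrefl a)
    · have h1a : ep2 l1 = a := hl1.resolve_left e1
      have t1 : a < ep1 l1 := by rw [← e2, heq]; exact hlt l2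
      have t2 : ep1 l1 < a := by rw [← h1a]; exact hlt l1
      exact absurd (t1.trans t2) (lt_irrefl a)
    · have h1a : ep2 l1 = a := hl1.resolve_left e1
      have h2a : ep2 l2 = a := hl2.resolve_left e2
      exact hinj (Prod.ext heq (h1a.trans h2a.symm))
  · intro b hb
    simp only [Set.mem_toFinset, SimpleGraph.mem_neighborSet] at hb
    obtain ⟨j, hj | hj⟩ := (hedges a b).1 hb
    · refine ⟨j, by simp [Finset.mem_filter, hj.1], ?_⟩
      rw [if_pos hj.1]; exact hj.2
    · refine ⟨j, by simp [Finset.mem_filter, hj.2], ?_⟩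
      rw [if_neg (by rw [hj.1]; exact fun h => (G.ne_of_adj hb) h.symm)]
      exact hj.1

lemma epFiber3 (hcubic : ∀ v : Fin n, (G.neighborSet v).ncard = 3)
    (hlt : ∀ j, ep1 j < ep2 j)
    (hedges : ∀ u v : Fin n,
      G.Adj u v ↔ ∃ j, (ep1 j = u ∧ ep2 j = v) ∨ (ep1 j = v ∧ ep2 j = u))
    (hinj : Function.Injective fun j => (ep1 j, ep2 j)) (F : Fin n → ℕ) :
    (∑ l, F (ep1 l)) + (∑ l, F (ep2 l)) = 3 * ∑ a, F a := by
  rw [fiber_sum ep1 F, fiber_sum ep2 F, ← Finset.sum_add_distrib, Finset.mul_sum]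
  refine Finset.sum_congr rfl fun a _ => ?_
  rw [← add_mul, deg_eq ep1 ep2 G hcubic hlt hedges hinj a]

lemma two_m_eq (hcubic : ∀ v : Fin n, (G.neighborSet v).ncard = 3)
    (hlt : ∀ j, ep1 j < ep2 j)
    (hedges : ∀ u v : Fin n,
      G.Adj u v ↔ ∃ j, (ep1 j = u ∧ ep2 j = v) ∨ (ep1 j = v ∧ ep2 j = u))
    (hinj : Function.Injective fun j => (ep1 j, ep2 j)) :
    2 * m = 3 * n := by
  have := epFiber3 ep1 ep2 G hcubic hlt hedges hinj (fun _ => 1)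
  simpa [two_mul] using this

lemma sum_lt_twice (t : ℕ) :
    2 * (∑ a : Fin t, ∑ k : Fin t, if a < k then 1 else 0) = t * (t - 1) := by
  have swap : (∑ a : Fin t, ∑ k : Fin t, if a < k then (1:ℕ) else 0) =
      ∑ a : Fin t, ∑ k : Fin t, if k < a then 1 else 0 := Finset.sum_comm
  have total : (∑ a : Fin t, ∑ k : Fin t,
      ((if a < k then (1:ℕ) else 0) + ((if k < a then 1 else 0) +
        (if a = k then 1 else 0)))) = t * t := by
    have h : ∀ a k : Fin t, ((if a < k then (1:ℕ) else 0) + ((if k < a then 1 else 0) +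
        (if a = k then 1 else 0))) = 1 := by
      intro a k
      rcases lt_trichotomy a k with h | h | h
      · simp [h, asymm h, h.ne]
      · simp [h, lt_irrefl]
      · simp [h, asymm h, h.ne']
    simp only [h]
    simp [mul_comm]
  have diag : (∑ a : Fin t, ∑ k : Fin t, if a = k then (1:ℕ) else 0) = t := by
    simp [Finset.sum_ite_eq]
  have expand : (∑ a : Fin t, ∑ k : Fin t,
      ((if a < k then (1:ℕ) else 0) + ((if k < a then 1 else 0) +
        (if a = k then 1 else 0)))) =
      (∑ a : Fin t, ∑ k : Fin t, if a < k then (1:ℕ) else 0) +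
        ((∑ a : Fin t, ∑ k : Fin t, if k < a then (1:ℕ) else 0) +
          (∑ a : Fin t, ∑ k : Fin t, if a = k then (1:ℕ) else 0)) := by
    simp only [Finset.sum_add_distrib]
  have key := expand.symm.trans total
  rw [← swap, diag] at key
  have ht : t * t - t = t * (t - 1) := by
    cases t with
    | zero => rfl
    | succ u => rw [Nat.succ_sub_one, Nat.mul_succ, Nat.add_sub_cancel]
  rw [← ht]
  omega

end Aux6
section Aux7
open Finset

variable {n m : ℕ} (p q p' q' : ℕ) (ep1 ep2 : Fin m → Fin n) (X Y : Set (Fin n))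
variable [DecidablePred (· ∈ X)] [DecidablePred (· ∈ Y)]

lemma LV_norm (W Z : Set (Fin n)) [DecidablePred (· ∈ W)] [DecidablePred (· ∈ Z)]
    (rel : Fin n → Fin n → Prop) [∀ a b, Decidable (rel a b)] :
    LV ep1 ep2 W Z rel = ∑ lr : Bool, ∑ l : Fin m, ∑ i : Fin n,
      if i ∈ W ∧ linkIdx ep1 ep2 lr l ∈ Z ∧ rel (linkIdx ep1 ep2 lr l) i
      then 1 else 0 := by
  have h : ∀ i : Fin n, (if i ∈ W then
      lcnt ep1 ep2 Z (fun lr' l' => rel (linkIdx ep1 ep2 lr' l') i) else 0) =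
      ∑ lr : Bool, ∑ l : Fin m,
        if i ∈ W ∧ linkIdx ep1 ep2 lr l ∈ Z ∧ rel (linkIdx ep1 ep2 lr l) i
        then 1 else 0 := by
    intro i
    by_cases hi : i ∈ W <;> simp [lcnt, hi]
  rw [LV]
  simp only [h]
  rw [Finset.sum_comm]
  exact Finset.sum_congr rfl fun lr _ => Finset.sum_comm

lemma LE_norm (W Z : Set (Fin n)) [DecidablePred (· ∈ W)] [DecidablePred (· ∈ Z)]
    (P : Fin m → Bool → Fin m → Prop) [∀ l lr j, Decidable (P l lr j)] :
    LEc ep1 ep2 W Z P = ∑ lr : Bool, ∑ j : Fin m, ∑ l : Fin m,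
      if ep1 l ∈ W ∧ linkIdx ep1 ep2 lr j ∈ Z ∧ P l lr j then 1 else 0 := by
  have h : ∀ l : Fin m, (if ep1 l ∈ W then
      lcnt ep1 ep2 Z (fun lr' l' => P l lr' l') else 0) =
      ∑ lr : Bool, ∑ j : Fin m,
        if ep1 l ∈ W ∧ linkIdx ep1 ep2 lr j ∈ Z ∧ P l lr j then 1 else 0 := by
    intro l
    by_cases hl : ep1 l ∈ W <;> simp [lcnt, hl]
  rw [LEc]
  simp only [h]
  rw [Finset.sum_comm]
  exact Finset.sum_congr rfl fun lr _ => Finset.sum_comm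

lemma GV_norm (W Z : Set (Fin n)) [DecidablePred (· ∈ W)] [DecidablePred (· ∈ Z)]
    (rel : Fin n → Fin n → Prop) [∀ a b, Decidable (rel a b)] :
    GV ep1 ep2 W Z rel = ∑ lr : Bool, ∑ j : Fin m, ∑ k : Fin n,
      if linkIdx ep1 ep2 lr j ∈ W ∧ k ∈ Z ∧ rel (linkIdx ep1 ep2 lr j) k
      then 1 else 0 := by
  rw [GV]
  refine Finset.sum_congr rfl fun lr _ => Finset.sum_congr rfl fun j _ => ?_
  by_cases hj : linkIdx ep1 ep2 lr j ∈ W <;> simp [vcnt, hj]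

lemma GE_norm (W Z : Set (Fin n)) [DecidablePred (· ∈ W)] [DecidablePred (· ∈ Z)]
    (P : Bool → Fin m → Fin m → Prop) [∀ lr j l, Decidable (P lr j l)] :
    GE ep1 ep2 W Z P = ∑ lr : Bool, ∑ j : Fin m, ∑ l : Fin m,
      if linkIdx ep1 ep2 lr j ∈ W ∧ ep1 l ∈ Z ∧ P lr j l then 1 else 0 := by
  rw [GE]
  refine Finset.sum_congr rfl fun lr _ => Finset.sum_congr rfl fun j _ => ?_
  by_cases hj : linkIdx ep1 ep2 lr j ∈ W <;> simp [ecnt, hj]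

/-- canonical totals -/
def TLt {n m : ℕ} (ep1 ep2 : Fin m → Fin n) : ℕ :=
  ∑ lr : Bool, ∑ l : Fin m, ∑ k : Fin n,
    if linkIdx ep1 ep2 lr l < k then 1 else 0

def TjLt (m : ℕ) : ℕ :=
  ∑ _lr : Bool, ∑ j : Fin m, ∑ l : Fin m, if l < j then (1:ℕ) else 0

def CRcut {n m : ℕ} (ep1 ep2 : Fin m → Fin n) (X Y : Set (Fin n))
    [DecidablePred (· ∈ X)] [DecidablePred (· ∈ Y)] : ℕ :=
  ∑ j : Fin m, if (ep1 j ∈ X ∧ ep2 j ∈ Y) ∨ (ep1 j ∈ Y ∧ ep2 j ∈ X) then 1 else 0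

variable (hXY : X ∪ Y = Set.univ) (hd : Disjoint X Y)

lemma memP (hXY : X ∪ Y = Set.univ) (hd : Disjoint X Y) (a : Fin n) :
    (a ∈ X ∧ a ∉ Y) ∨ (a ∈ Y ∧ a ∉ X) := by
  have ha : a ∈ X ∪ Y := hXY ▸ Set.mem_univ a
  rcases ha with h | h
  · exact Or.inl ⟨h, fun hy => Set.disjoint_left.mp hd h hy⟩
  · exact Or.inr ⟨h, fun hx => Set.disjoint_left.mp hd hx h⟩

include hXY hd

lemma CV1 :
    LV ep1 ep2 X Y (· < ·) + LV ep1 ep2 Y Y (· ≤ ·) +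
      GV ep1 ep2 X Y (· < ·) + GV ep1 ep2 X X (· ≤ ·) =
    TLt ep1 ep2 + 2 * m := by
  have hTEq : (∑ lr : Bool, ∑ l : Fin m, ∑ k : Fin n,
      if linkIdx ep1 ep2 lr l = k then (1:ℕ) else 0) = 2 * m := by
    simp [Finset.sum_ite_eq, two_mul]
  have key : ∀ a k : Fin n,
      ((((if k ∈ X ∧ a ∈ Y ∧ a < k then (1:ℕ) else 0) +
        (if k ∈ Y ∧ a ∈ Y ∧ a ≤ k then 1 else 0)) +
        (if a ∈ X ∧ k ∈ Y ∧ a < k then 1 else 0)) +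
        (if a ∈ X ∧ k ∈ X ∧ a ≤ k then 1 else 0)) =
      (if a < k then 1 else 0) + (if a = k then 1 else 0) := by
    intro a k
    rcases lt_trichotomy a k with h | h | h
    · rcases memP X Y hXY hd a with ⟨ha1, ha2⟩ | ⟨ha1, ha2⟩ <;>
        rcases memP X Y hXY hd k with ⟨hk1, hk2⟩ | ⟨hk1, hk2⟩ <;>
        simp [ha1, ha2, hk1, hk2, h, le_of_lt h, ne_of_lt h]
    · subst h
      rcases memP X Y hXY hd a with ⟨ha1, ha2⟩ | ⟨ha1, ha2⟩ <;>
        simp [ha1, ha2, lt_irrefl, le_refl]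
    · rcases memP X Y hXY hd a with ⟨ha1, ha2⟩ | ⟨ha1, ha2⟩ <;>
        rcases memP X Y hXY hd k with ⟨hk1, hk2⟩ | ⟨hk1, hk2⟩ <;>
        simp [ha1, ha2, hk1, hk2, asymm h, not_le.mpr h, ne_of_gt h]
  rw [LV_norm, LV_norm, GV_norm, GV_norm, TLt, ← hTEq]
  simp only [← Finset.sum_add_distrib]
  exact Finset.sum_congr rfl fun lr _ => Finset.sum_congr rfl fun l _ =>
    Finset.sum_congr rfl fun k _ => key (linkIdx ep1 ep2 lr l) k

lemma CV2 :
    LV ep1 ep2 Y Y (· < ·) + LV ep1 ep2 X Y (· < ·) +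
      GV ep1 ep2 X X (· < ·) + GV ep1 ep2 X Y (· < ·) = TLt ep1 ep2 := by
  have key : ∀ a k : Fin n,
      ((((if k ∈ Y ∧ a ∈ Y ∧ a < k then (1:ℕ) else 0) +
        (if k ∈ X ∧ a ∈ Y ∧ a < k then 1 else 0)) +
        (if a ∈ X ∧ k ∈ X ∧ a < k then 1 else 0)) +
        (if a ∈ X ∧ k ∈ Y ∧ a < k then 1 else 0)) =
      (if a < k then 1 else 0) := by
    intro a k
    by_cases h : a < k
    · rcases memP X Y hXY hd a with ⟨ha1, ha2⟩ | ⟨ha1, ha2⟩ <;>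
        rcases memP X Y hXY hd k with ⟨hk1, hk2⟩ | ⟨hk1, hk2⟩ <;>
        simp [ha1, ha2, hk1, hk2, h]
    · simp [h]
  rw [LV_norm, LV_norm, GV_norm, GV_norm, TLt]
  simp only [← Finset.sum_add_distrib]
  exact Finset.sum_congr rfl fun lr _ => Finset.sum_congr rfl fun l _ =>
    Finset.sum_congr rfl fun k _ => key (linkIdx ep1 ep2 lr l) k

omit hXY hd in
lemma sum_ite_eq_and {α : Type} [DecidableEq α] [Fintype α] (j : α) (D : α → Prop)
    [DecidablePred D] :
    (∑ l, if l = j ∧ D l then (1:ℕ) else 0) = if D j then 1 else 0 := by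
  simp only [ite_and]
  rw [Finset.sum_ite_eq' Finset.univ j (fun l => if D l then (1:ℕ) else 0)]
  simp

lemma CE1 :
    LEc ep1 ep2 X Y (fun l _lr j => l ≤ j) + LEc ep1 ep2 Y Y (fun l _lr j => l < j) +
      GE ep1 ep2 X Y (fun _lr j l => l ≤ j) + GE ep1 ep2 X X (fun _lr j l => l < j) =
    TjLt m + CRcut ep1 ep2 X Y := by
  have key : ∀ (a e : Fin n) (j l : Fin m),
      ((((if e ∈ X ∧ a ∈ Y ∧ l ≤ j then (1:ℕ) else 0) +
        (if e ∈ Y ∧ a ∈ Y ∧ l < j then 1 else 0)) +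
        (if a ∈ X ∧ e ∈ Y ∧ l ≤ j then 1 else 0)) +
        (if a ∈ X ∧ e ∈ X ∧ l < j then 1 else 0)) =
      (if l < j then 1 else 0) +
        (if l = j ∧ ((a ∈ X ∧ e ∈ Y) ∨ (a ∈ Y ∧ e ∈ X)) then 1 else 0) := by
    intro a e j l
    rcases lt_trichotomy l j with h | h | h
    · rcases memP X Y hXY hd a with ⟨ha1, ha2⟩ | ⟨ha1, ha2⟩ <;>
        rcases memP X Y hXY hd e with ⟨he1, he2⟩ | ⟨he1, he2⟩ <;>
        simp [ha1, ha2, he1, he2, h, le_of_lt h, ne_of_lt h]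
    · subst h
      rcases memP X Y hXY hd a with ⟨ha1, ha2⟩ | ⟨ha1, ha2⟩ <;>
        rcases memP X Y hXY hd e with ⟨he1, he2⟩ | ⟨he1, he2⟩ <;>
        simp [ha1, ha2, he1, he2, lt_irrefl, le_refl]
    · rcases memP X Y hXY hd a with ⟨ha1, ha2⟩ | ⟨ha1, ha2⟩ <;>
        rcases memP X Y hXY hd e with ⟨he1, he2⟩ | ⟨he1, he2⟩ <;>
        simp [ha1, ha2, he1, he2, asymm h, not_le.mpr h, ne_of_gt h]
  have hCRT : (∑ lr : Bool, ∑ j : Fin m, ∑ l : Fin m,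
      if l = j ∧ ((linkIdx ep1 ep2 lr j ∈ X ∧ ep1 l ∈ Y) ∨
        (linkIdx ep1 ep2 lr j ∈ Y ∧ ep1 l ∈ X)) then (1:ℕ) else 0) =
      CRcut ep1 ep2 X Y := by
    have h1 : ∀ (lr : Bool) (j : Fin m), (∑ l : Fin m,
        if l = j ∧ ((linkIdx ep1 ep2 lr j ∈ X ∧ ep1 l ∈ Y) ∨
          (linkIdx ep1 ep2 lr j ∈ Y ∧ ep1 l ∈ X)) then (1:ℕ) else 0) =
        if (linkIdx ep1 ep2 lr j ∈ X ∧ ep1 j ∈ Y) ∨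
          (linkIdx ep1 ep2 lr j ∈ Y ∧ ep1 j ∈ X) then 1 else 0 :=
      fun lr j => sum_ite_eq_and j _
    simp only [h1, Fintype.sum_bool]
    have hff : ∀ j : Fin m, (if (linkIdx ep1 ep2 false j ∈ X ∧ ep1 j ∈ Y) ∨
        (linkIdx ep1 ep2 false j ∈ Y ∧ ep1 j ∈ X) then (1:ℕ) else 0) = 0 := by
      intro j
      refine if_neg ?_
      rintro (⟨h1', h2'⟩ | ⟨h1', h2'⟩) <;>
        simp only [linkIdx, Bool.false_eq_true, if_false] at h1' <;>
        exact Set.disjoint_left.mp hd (by assumption) (by assumption)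
    have htt : ∀ j : Fin m, (if (linkIdx ep1 ep2 true j ∈ X ∧ ep1 j ∈ Y) ∨
        (linkIdx ep1 ep2 true j ∈ Y ∧ ep1 j ∈ X) then (1:ℕ) else 0) =
        if (ep1 j ∈ X ∧ ep2 j ∈ Y) ∨ (ep1 j ∈ Y ∧ ep2 j ∈ X) then 1 else 0 := by
      intro j
      refine if_congr ?_ rfl rfl
      simp only [linkIdx, if_true]
      tauto
    simp only [hff, htt, CRcut]
    simp
  rw [LE_norm, LE_norm, GE_norm, GE_norm, TjLt, ← hCRT]
  simp only [← Finset.sum_add_distrib]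
  exact Finset.sum_congr rfl fun lr _ => Finset.sum_congr rfl fun j _ =>
    Finset.sum_congr rfl fun l _ => key (linkIdx ep1 ep2 lr j) (ep1 l) j l

lemma CE2 :
    LEc ep1 ep2 Y Y (fun l lr j => l < j ∨ (l = j ∧ lr = false)) +
      LEc ep1 ep2 X Y (fun l _lr j => l < j) +
      GE ep1 ep2 X X (fun lr j l => l < j ∨ (l = j ∧ lr = false)) +
      GE ep1 ep2 X Y (fun _lr j l => l < j) =
    TjLt m + m := by
  have key : ∀ (lr : Bool) (j l : Fin m),
      ((((if ep1 l ∈ Y ∧ linkIdx ep1 ep2 lr j ∈ Y ∧ (l < j ∨ (l = j ∧ lr = false))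
          then (1:ℕ) else 0) +
        (if ep1 l ∈ X ∧ linkIdx ep1 ep2 lr j ∈ Y ∧ l < j then 1 else 0)) +
        (if linkIdx ep1 ep2 lr j ∈ X ∧ ep1 l ∈ X ∧ (l < j ∨ (l = j ∧ lr = false))
          then 1 else 0)) +
        (if linkIdx ep1 ep2 lr j ∈ X ∧ ep1 l ∈ Y ∧ l < j then 1 else 0)) =
      (if l < j then 1 else 0) + (if l = j ∧ lr = false then 1 else 0) := by
    intro lr j l
    rcases lt_trichotomy l j with h | h | h
    · rcases memP X Y hXY hd (linkIdx ep1 ep2 lr j) with ⟨ha1, ha2⟩ | ⟨ha1, ha2⟩ <;>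
        rcases memP X Y hXY hd (ep1 l) with ⟨he1, he2⟩ | ⟨he1, he2⟩ <;>
        simp [ha1, ha2, he1, he2, h, ne_of_lt h]
    · subst h
      cases lr
      · have hae : linkIdx ep1 ep2 false l = ep1 l := by simp [linkIdx]
        rcases memP X Y hXY hd (ep1 l) with ⟨he1, he2⟩ | ⟨he1, he2⟩ <;>
          simp [hae, he1, he2, lt_irrefl]
      · rcases memP X Y hXY hd (linkIdx ep1 ep2 true l) with ⟨ha1, ha2⟩ | ⟨ha1, ha2⟩ <;>
          rcases memP X Y hXY hd (ep1 l) with ⟨he1, he2⟩ | ⟨he1, he2⟩ <;>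
          simp [ha1, ha2, he1, he2, lt_irrefl]
    · rcases memP X Y hXY hd (linkIdx ep1 ep2 lr j) with ⟨ha1, ha2⟩ | ⟨ha1, ha2⟩ <;>
        rcases memP X Y hXY hd (ep1 l) with ⟨he1, he2⟩ | ⟨he1, he2⟩ <;>
        simp [ha1, ha2, he1, he2, asymm h, ne_of_gt h]
  have hMS : (∑ lr : Bool, ∑ j : Fin m, ∑ l : Fin m,
      if l = j ∧ lr = false then (1:ℕ) else 0) = m := by
    have h1 : ∀ (lr : Bool) (j : Fin m), (∑ l : Fin m,
        if l = j ∧ lr = false then (1:ℕ) else 0) = if lr = false then 1 else 0 :=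
      fun lr j => sum_ite_eq_and j _
    simp only [h1, Fintype.sum_bool]
    simp
  rw [LE_norm, LE_norm, GE_norm, GE_norm]
  have hmerge : (((∑ lr : Bool, ∑ j : Fin m, ∑ l : Fin m,
      if ep1 l ∈ Y ∧ linkIdx ep1 ep2 lr j ∈ Y ∧ (l < j ∨ (l = j ∧ lr = false))
      then (1:ℕ) else 0) +
      (∑ lr : Bool, ∑ j : Fin m, ∑ l : Fin m,
        if ep1 l ∈ X ∧ linkIdx ep1 ep2 lr j ∈ Y ∧ l < j then 1 else 0)) +
      (∑ lr : Bool, ∑ j : Fin m, ∑ l : Fin m,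
        if linkIdx ep1 ep2 lr j ∈ X ∧ ep1 l ∈ X ∧ (l < j ∨ (l = j ∧ lr = false))
        then 1 else 0)) +
      (∑ lr : Bool, ∑ j : Fin m, ∑ l : Fin m,
        if linkIdx ep1 ep2 lr j ∈ X ∧ ep1 l ∈ Y ∧ l < j then 1 else 0) =
      TjLt m + (∑ lr : Bool, ∑ j : Fin m, ∑ l : Fin m,
        if l = j ∧ lr = false then (1:ℕ) else 0) := by
    rw [TjLt]
    simp only [← Finset.sum_add_distrib]
    exact Finset.sum_congr rfl fun lr _ => Finset.sum_congr rfl fun j _ =>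
      Finset.sum_congr rfl fun l _ => key lr j l
  rw [hmerge, hMS]

omit hXY hd in
lemma cardVP (hXY : X ∪ Y = Set.univ) (hd : Disjoint X Y) :
    cardV X + cardV Y = n := by
  rw [cardV, cardV, ← Finset.sum_add_distrib]
  have h : ∀ a : Fin n, ((if a ∈ X then (1:ℕ) else 0) + (if a ∈ Y then 1 else 0)) = 1 := by
    intro a
    rcases memP X Y hXY hd a with ⟨h1, h2⟩ | ⟨h1, h2⟩ <;> simp [h1, h2]
  simp only [h]
  simp

omit hXY hd in
lemma cardEP (hXY : X ∪ Y = Set.univ) (hd : Disjoint X Y) :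
    cardE ep1 X + cardE ep1 Y = m := by
  rw [cardE, cardE, ← Finset.sum_add_distrib]
  have h : ∀ l : Fin m, ((if ep1 l ∈ X then (1:ℕ) else 0) +
      (if ep1 l ∈ Y then 1 else 0)) = 1 := by
    intro l
    rcases memP X Y hXY hd (ep1 l) with ⟨h1, h2⟩ | ⟨h1, h2⟩ <;> simp [h1, h2]
  simp only [h]
  simp

end Aux7
section Aux8
open Finset

variable {n m : ℕ} (p q p' q' : ℕ) (ep1 ep2 : Fin m → Fin n) (X Y : Set (Fin n))
variable [DecidablePred (· ∈ X)] [DecidablePred (· ∈ Y)]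
variable (G : SimpleGraph (Fin n))

lemma TLt_eval (hcubic : ∀ v : Fin n, (G.neighborSet v).ncard = 3)
    (hlt : ∀ j, ep1 j < ep2 j)
    (hedges : ∀ u v : Fin n,
      G.Adj u v ↔ ∃ j, (ep1 j = u ∧ ep2 j = v) ∨ (ep1 j = v ∧ ep2 j = u))
    (hinj : Function.Injective fun j => (ep1 j, ep2 j)) :
    2 * TLt ep1 ep2 = 3 * (n * (n - 1)) := by
  have hsb : TLt ep1 ep2 =
      (∑ l, ∑ k : Fin n, if ep2 l < k then (1:ℕ) else 0) +
        (∑ l, ∑ k : Fin n, if ep1 l < k then (1:ℕ) else 0) := by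
    rw [TLt, Fintype.sum_bool]
    simp [linkIdx]
  have hf := epFiber3 ep1 ep2 G hcubic hlt hedges hinj
    (fun a => ∑ k : Fin n, if a < k then (1:ℕ) else 0)
  have hs := sum_lt_twice n
  set R := n * (n - 1) with hR
  omega

lemma TjLt_eval : TjLt m = m * (m - 1) := by
  have hsb : TjLt m = 2 * (∑ j : Fin m, ∑ l : Fin m, if l < j then (1:ℕ) else 0) := by
    rw [TjLt, Fintype.sum_bool]; omega
  have hsw : (∑ j : Fin m, ∑ l : Fin m, if l < j then (1:ℕ) else 0) =
      ∑ a : Fin m, ∑ k : Fin m, if a < k then (1:ℕ) else 0 := Finset.sum_comm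
  have hs := sum_lt_twice m
  set R := m * (m - 1) with hR
  omega

lemma CR_eq [DecidableRel G.Adj]
    (hlt : ∀ j, ep1 j < ep2 j)
    (hedges : ∀ u v : Fin n,
      G.Adj u v ↔ ∃ j, (ep1 j = u ∧ ep2 j = v) ∨ (ep1 j = v ∧ ep2 j = u))
    (hinj : Function.Injective fun j => (ep1 j, ep2 j))
    (hd : Disjoint X Y) :
    cutSize G X Y = CRcut ep1 ep2 X Y := by
  have h1 : CRcut ep1 ep2 X Y = (Finset.univ.filter fun j : Fin m =>
      (ep1 j ∈ X ∧ ep2 j ∈ Y) ∨ (ep1 j ∈ Y ∧ ep2 j ∈ X)).card := by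
    simp [CRcut, Finset.sum_boole]
  rw [cutSize, Set.ncard_eq_toFinset_card', Set.toFinset_setOf, h1]
  refine (Finset.card_bij
    (fun j _ => if ep1 j ∈ X then (ep1 j, ep2 j) else (ep2 j, ep1 j)) ?_ ?_ ?_).symm
  · intro j hj
    simp only [Finset.mem_filter, Finset.mem_univ, true_and] at hj ⊢
    by_cases hx : ep1 j ∈ X
    · rw [if_pos hx]
      have h2 : ep2 j ∈ Y := by
        rcases hj with ⟨_, h⟩ | ⟨h, _⟩
        · exact h
        · exact absurd (Set.disjoint_left.mp hd hx h) not_false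
      exact ⟨hx, h2, (hedges _ _).2 ⟨j, Or.inl ⟨rfl, rfl⟩⟩⟩
    · rw [if_neg hx]
      rcases hj with ⟨h, _⟩ | ⟨h1', h2'⟩
      · exact absurd h hx
      · exact ⟨h2', h1', (hedges _ _).2 ⟨j, Or.inr ⟨rfl, rfl⟩⟩⟩
  · intro j1 hj1 j2 hj2 heq
    by_cases h1' : ep1 j1 ∈ X <;> by_cases h2' : ep1 j2 ∈ X <;>
      rw [Prod.ext_iff] at heq <;>
      simp only [h1', h2', if_pos, if_neg, if_true, if_false] at heq
    · exact hinj (Prod.ext heq.1 heq.2)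
    · exfalso
      have t1 : ep1 j1 < ep2 j1 := hlt j1
      rw [heq.1, heq.2] at t1
      exact absurd ((hlt j2).trans t1) (lt_irrefl _)
    · exfalso
      have t1 : ep1 j1 < ep2 j1 := hlt j1
      rw [heq.1, heq.2] at t1
      exact absurd ((hlt j2).trans t1) (lt_irrefl _)
    · exact hinj (Prod.ext heq.2 heq.1)
  · intro pr hpr
    simp only [Finset.mem_filter, Finset.mem_univ, true_and] at hpr
    obtain ⟨hA, hB, hadj⟩ := hpr
    obtain ⟨j, hj | hj⟩ := (hedges pr.1 pr.2).1 hadj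
    · refine ⟨j, ?_, ?_⟩
      · simp only [Finset.mem_filter, Finset.mem_univ, true_and]
        exact Or.inl ⟨by rw [hj.1]; exact hA, by rw [hj.2]; exact hB⟩
      · show (if ep1 j ∈ X then (ep1 j, ep2 j) else (ep2 j, ep1 j)) = pr
        rw [if_pos (by rw [hj.1]; exact hA)]
        exact Prod.ext hj.1 hj.2
    · refine ⟨j, ?_, ?_⟩
      · simp only [Finset.mem_filter, Finset.mem_univ, true_and]
        exact Or.inr ⟨by rw [hj.1]; exact hB, by rw [hj.2]; exact hA⟩
      · show (if ep1 j ∈ X then (ep1 j, ep2 j) else (ep2 j, ep1 j)) = pr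
        rw [if_neg (fun hx => Set.disjoint_left.mp hd hx (by rw [hj.1]; exact hB))]
        exact Prod.ext hj.2 hj.1

lemma LLS_le (hcubic : ∀ v : Fin n, (G.neighborSet v).ncard = 3)
    (hlt : ∀ j, ep1 j < ep2 j)
    (hedges : ∀ u v : Fin n,
      G.Adj u v ↔ ∃ j, (ep1 j = u ∧ ep2 j = v) ∨ (ep1 j = v ∧ ep2 j = u))
    (hinj : Function.Injective fun j => (ep1 j, ep2 j)) :
    LLS p q p' q' ep1 ep2 X Y ≤ (2 * (3 * cardV X)) * (2 * (3 * cardV Y)) := by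
  have hfX := epFiber3 ep1 ep2 G hcubic hlt hedges hinj
    (fun a => if a ∈ X then (1:ℕ) else 0)
  have hfY := epFiber3 ep1 ep2 G hcubic hlt hedges hinj
    (fun a => if a ∈ Y then (1:ℕ) else 0)
  have hLB : (∑ lr' : Bool, ∑ _s' : Bool, ∑ l : Fin m,
      if linkIdx ep1 ep2 lr' l ∈ Y then (1:ℕ) else 0) = 2 * (3 * cardV Y) := by
    have e1 : ∀ l, linkIdx ep1 ep2 true l = ep2 l := fun _ => rfl
    have e2 : ∀ l, linkIdx ep1 ep2 false l = ep1 l := fun _ => rfl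
    simp only [Fintype.sum_bool, e1, e2, cardV]
    omega
  have hT : (∑ lr : Bool, ∑ _s : Bool, ∑ j : Fin m,
      if linkIdx ep1 ep2 lr j ∈ X then (1:ℕ) else 0) = 2 * (3 * cardV X) := by
    have e1 : ∀ l, linkIdx ep1 ep2 true l = ep2 l := fun _ => rfl
    have e2 : ∀ l, linkIdx ep1 ep2 false l = ep1 l := fun _ => rfl
    simp only [Fintype.sum_bool, e1, e2, cardV]
    omega
  have hcnt : ∀ lr s j, cntLL p q p' q' ep1 ep2 Y lr s j ≤
      ∑ lr' : Bool, ∑ _s' : Bool, ∑ l : Fin m,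
        if linkIdx ep1 ep2 lr' l ∈ Y then (1:ℕ) else 0 := by
    intro lr s j
    rw [cntLL]
    refine Finset.sum_le_sum fun lr' _ => Finset.sum_le_sum fun s' _ =>
      Finset.sum_le_sum fun l _ => ?_
    split_ifs with h1 h2
    · exact le_refl 1
    · exact absurd h1.1 h2
    · exact Nat.zero_le _
    · exact Nat.zero_le _
  have hpoint : ∀ (lrb : Bool) (jj : Fin m), (if linkIdx ep1 ep2 lrb jj ∈ X then
      (∑ lr' : Bool, ∑ _s' : Bool, ∑ l : Fin m,
        if linkIdx ep1 ep2 lr' l ∈ Y then (1:ℕ) else 0) else 0) =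
      (∑ lr' : Bool, ∑ _s' : Bool, ∑ l : Fin m,
        if linkIdx ep1 ep2 lr' l ∈ Y then (1:ℕ) else 0) *
        (if linkIdx ep1 ep2 lrb jj ∈ X then 1 else 0) := by
    intro lrb jj; split <;> simp
  calc LLS p q p' q' ep1 ep2 X Y
      ≤ ∑ lr : Bool, ∑ _s : Bool, ∑ j : Fin m,
          (if linkIdx ep1 ep2 lr j ∈ X then
            (∑ lr' : Bool, ∑ _s' : Bool, ∑ l : Fin m,
              if linkIdx ep1 ep2 lr' l ∈ Y then (1:ℕ) else 0) else 0) := by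
        rw [LLS]
        refine Finset.sum_le_sum fun lr _ => Finset.sum_le_sum fun s _ =>
          Finset.sum_le_sum fun j _ => ?_
        split_ifs with h
        · exact hcnt lr s j
        · exact le_refl 0
    _ = (∑ lr' : Bool, ∑ _s' : Bool, ∑ l : Fin m,
          if linkIdx ep1 ep2 lr' l ∈ Y then (1:ℕ) else 0) *
        (∑ lr : Bool, ∑ _s : Bool, ∑ j : Fin m,
          if linkIdx ep1 ep2 lr j ∈ X then (1:ℕ) else 0) := by
        simp only [hpoint, ← Finset.mul_sum]
    _ = (2 * (3 * cardV X)) * (2 * (3 * cardV Y)) := by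
        rw [hT, hLB, Nat.mul_comm]

end Aux8
section Aux9
open Finset

variable {n m : ℕ} (p q p' q' : ℕ) (ep1 ep2 : Fin m → Fin n) (X Y : Set (Fin n))
variable [DecidablePred (· ∈ X)] [DecidablePred (· ∈ Y)]

lemma gr_vK1 : (∑ i : Fin n, ∑ _r : Fin q, if i ∈ X then
      q + p + 2 * lcnt ep1 ep2 Y (fun lr' l' => linkIdx ep1 ep2 lr' l' < i) else 0) =
    q * ((q + p) * cardV X + 2 * LV ep1 ep2 X Y (· < ·)) := by
  rw [g_gadget]; rfl

lemma gr_vK2 : (∑ i : Fin n, ∑ _r : Fin q, if i ∈ Y then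
      q + p + 2 * lcnt ep1 ep2 Y (fun lr' l' => linkIdx ep1 ep2 lr' l' ≤ i) else 0) =
    q * ((q + p) * cardV Y + 2 * LV ep1 ep2 Y Y (· ≤ ·)) := by
  rw [g_gadget]; rfl

lemma gr_vS1 : (∑ i : Fin n, ∑ _r : Fin p, if i ∈ Y then
      q + 2 * lcnt ep1 ep2 Y (fun lr' l' => linkIdx ep1 ep2 lr' l' < i) else 0) =
    p * (q * cardV Y + 2 * LV ep1 ep2 Y Y (· < ·)) := by
  rw [g_gadget]; rfl

lemma gr_vS2 : (∑ i : Fin n, ∑ _r : Fin p, if i ∈ X then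
      q + 2 * lcnt ep1 ep2 Y (fun lr' l' => linkIdx ep1 ep2 lr' l' < i) else 0) =
    p * (q * cardV X + 2 * LV ep1 ep2 X Y (· < ·)) := by
  rw [g_gadget]; rfl

lemma gr_eK1 : (∑ l : Fin m, ∑ _r : Fin q', if ep1 l ∈ X then
      q' + p' + 2 * lcnt ep1 ep2 Y (fun _lr' l' => l ≤ l') else 0) =
    q' * ((q' + p') * cardE ep1 X + 2 * LEc ep1 ep2 X Y (fun l _lr j => l ≤ j)) := by
  rw [g_gadget]; rfl

lemma gr_eK2 : (∑ l : Fin m, ∑ _r : Fin q', if ep1 l ∈ Y then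
      q' + p' + 2 * lcnt ep1 ep2 Y (fun _lr' l' => l < l') else 0) =
    q' * ((q' + p') * cardE ep1 Y + 2 * LEc ep1 ep2 Y Y (fun l _lr j => l < j)) := by
  rw [g_gadget]; rfl

lemma gr_eS1 : (∑ l : Fin m, ∑ _r : Fin p', if ep1 l ∈ Y then
      q' + 2 * lcnt ep1 ep2 Y (fun lr' l' => l < l' ∨ (l = l' ∧ lr' = false)) else 0) =
    p' * (q' * cardE ep1 Y +
      2 * LEc ep1 ep2 Y Y (fun l lr j => l < j ∨ (l = j ∧ lr = false))) := by
  rw [g_gadget]; rfl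

lemma gr_eS2 : (∑ l : Fin m, ∑ _r : Fin p', if ep1 l ∈ X then
      q' + 2 * lcnt ep1 ep2 Y (fun _lr' l' => l < l') else 0) =
    p' * (q' * cardE ep1 X + 2 * LEc ep1 ep2 X Y (fun l _lr j => l < j)) := by
  rw [g_gadget]; rfl

lemma ite_add9 (Q : Prop) [Decidable Q] (t1 t2 t3 t4 t5 t6 t7 t8 t9 : ℕ) :
    (if Q then t1 + t2 + t3 + t4 + t5 + t6 + t7 + t8 + t9 else 0) =
      (if Q then t1 else 0) + (if Q then t2 else 0) + (if Q then t3 else 0) +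
      (if Q then t4 else 0) + (if Q then t5 else 0) + (if Q then t6 else 0) +
      (if Q then t7 else 0) + (if Q then t8 else 0) + (if Q then t9 else 0) := by
  split <;> simp

set_option maxHeartbeats 1000000 in
lemma g_link : (∑ lr : Bool, ∑ s : Bool, ∑ j : Fin m,
      if linkIdx ep1 ep2 lr j ∈ X then
        q * vcnt Y (fun k => linkIdx ep1 ep2 lr j < k) +
        q * vcnt X (fun k => linkIdx ep1 ep2 lr j ≤ k) +
        p * vcnt X (fun k => linkIdx ep1 ep2 lr j < k) +
        p * vcnt Y (fun k => linkIdx ep1 ep2 lr j < k) +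
        q' * ecnt ep1 Y (fun l => l ≤ j) + q' * ecnt ep1 X (fun l => l < j) +
        p' * ecnt ep1 X (fun l => l < j ∨ (l = j ∧ lr = false)) +
        p' * ecnt ep1 Y (fun l => l < j) + cntLL p q p' q' ep1 ep2 Y lr s j
      else 0) =
    2 * (q * GV ep1 ep2 X Y (· < ·)) + 2 * (q * GV ep1 ep2 X X (· ≤ ·)) +
    2 * (p * GV ep1 ep2 X X (· < ·)) + 2 * (p * GV ep1 ep2 X Y (· < ·)) +
    2 * (q' * GE ep1 ep2 X Y (fun _lr j l => l ≤ j)) +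
    2 * (q' * GE ep1 ep2 X X (fun _lr j l => l < j)) +
    2 * (p' * GE ep1 ep2 X X (fun lr j l => l < j ∨ (l = j ∧ lr = false))) +
    2 * (p' * GE ep1 ep2 X Y (fun _lr j l => l < j)) +
    LLS p q p' q' ep1 ep2 X Y := by
  simp only [ite_add9, Finset.sum_add_distrib]
  rw [triple_pull q (fun lr j => linkIdx ep1 ep2 lr j ∈ X)
      (fun lr j => vcnt Y (fun k => linkIdx ep1 ep2 lr j < k)),
    triple_pull q (fun lr j => linkIdx ep1 ep2 lr j ∈ X)
      (fun lr j => vcnt X (fun k => linkIdx ep1 ep2 lr j ≤ k)),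
    triple_pull p (fun lr j => linkIdx ep1 ep2 lr j ∈ X)
      (fun lr j => vcnt X (fun k => linkIdx ep1 ep2 lr j < k)),
    triple_pull p (fun lr j => linkIdx ep1 ep2 lr j ∈ X)
      (fun lr j => vcnt Y (fun k => linkIdx ep1 ep2 lr j < k)),
    triple_pull q' (fun lr j => linkIdx ep1 ep2 lr j ∈ X)
      (fun _lr j => ecnt ep1 Y (fun l => l ≤ j)),
    triple_pull q' (fun lr j => linkIdx ep1 ep2 lr j ∈ X)
      (fun _lr j => ecnt ep1 X (fun l => l < j)),
    triple_pull p' (fun lr j => linkIdx ep1 ep2 lr j ∈ X)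
      (fun lr j => ecnt ep1 X (fun l => l < j ∨ (l = j ∧ lr = false))),
    triple_pull p' (fun lr j => linkIdx ep1 ep2 lr j ∈ X)
      (fun _lr j => ecnt ep1 Y (fun l => l < j))]
  rfl

end Aux9
section Aux10
open Finset

variable {n m : ℕ} (p q p' q' : ℕ) (ep1 ep2 : Fin m → Fin n) (X Y : Set (Fin n))
variable [DecidablePred (· ∈ X)] [DecidablePred (· ∈ Y)]
variable (G : SimpleGraph (Fin n)) [DecidableRel G.Adj]

set_option maxHeartbeats 2000000 in
lemma master (hn : 4 ≤ n)
    (hcubic : ∀ v : Fin n, (G.neighborSet v).ncard = 3)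
    (hlt : ∀ j, ep1 j < ep2 j)
    (hedges : ∀ u v : Fin n,
      G.Adj u v ↔ ∃ j, (ep1 j = u ∧ ep2 j = v) ∨ (ep1 j = v ∧ ep2 j = u))
    (hinj : Function.Injective fun j => (ep1 j, ep2 j))
    (hXY : X ∪ Y = Set.univ) (hd : Disjoint X Y) :
    cutSize (reductionGraph n m p q p' q' ep1 ep2)
        (cutA ep1 ep2 X Y) (cutA ep1 ep2 Y X) =
      n * (2*p*q + q^2 + 6*q + 3*(p+q)*(n-1)) +
        m * (2*p'*q' + q'^2 + 2*p' + 2*(p'+q')*(m-1)) +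
        2*q'*(cutSize G X Y) + LLS p q p' q' ep1 ep2 X Y := by
  have h0 : cutSize (reductionGraph n m p q p' q' ep1 ep2)
      (cutA ep1 ep2 X Y) (cutA ep1 ep2 Y X) =
      ∑ u, ∑ v, cfun p q p' q' ep1 ep2 X Y u v := by
    rw [cutSize_eq_sum]
    rfl
  rw [h0, sum_rvert]
  beta_reduce
  simp only [f_vK1 p q p' q' ep1 ep2 X Y hd, f_vK2 p q p' q' ep1 ep2 X Y hd,
    f_vS1 p q p' q' ep1 ep2 X Y hd, f_vS2 p q p' q' ep1 ep2 X Y hd,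
    f_eK1 p q p' q' ep1 ep2 X Y hd, f_eK2 p q p' q' ep1 ep2 X Y hd,
    f_eS1 p q p' q' ep1 ep2 X Y hd, f_eS2 p q p' q' ep1 ep2 X Y hd,
    f_link p q p' q' ep1 ep2 X Y hd]
  rw [gr_vK1, gr_vK2, gr_vS1, gr_vS2, gr_eK1, gr_eK2, gr_eS1, gr_eS2, g_link]
  rw [CR_eq ep1 ep2 X Y G hlt hedges hinj hd]
  have hcv1 := CV1 ep1 ep2 X Y hXY hd
  have hcv2 := CV2 ep1 ep2 X Y hXY hd
  have hce1 := CE1 ep1 ep2 X Y hXY hd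
  have hce2 := CE2 ep1 ep2 X Y hXY hd
  have hTLte := TLt_eval ep1 ep2 G hcubic hlt hedges hinj
  have hTje := TjLt_eval (m := m)
  have hcV := cardVP X Y hXY hd
  have hcE := cardEP ep1 X Y hXY hd
  have h2m := two_m_eq ep1 ep2 G hcubic hlt hedges hinj
  have hm1 : 1 ≤ m := by omega
  have hn1 : 1 ≤ n := by omega
  obtain ⟨n1, rfl⟩ : ∃ n1, n = n1 + 1 := ⟨n - 1, by omega⟩
  obtain ⟨m1, rfl⟩ : ∃ m1, m = m1 + 1 := ⟨m - 1, by omega⟩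
  simp only [Nat.add_sub_cancel] at hTLte hTje ⊢
  zify at hcv1 hcv2 hce1 hce2 hTLte hTje hcV hcE h2m ⊢
  linear_combination (2*(q:ℤ))*hcv1 + (2*(p:ℤ))*hcv2 + (2*(q':ℤ))*hce1 +
    (2*(p':ℤ))*hce2 + ((p:ℤ)+q)*hTLte + (2*((p':ℤ)+q'))*hTje +
    ((q:ℤ)^2+2*p*q)*hcV + ((q':ℤ)^2+2*p'*q')*hcE + (2*(q:ℤ))*h2m

end Aux10
/-- for every cut `[X,Y]` of `G`, the cut `[A,B] = f(X,Y)` of `G'`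
satisfies `α₁ + α₂ + 2q'·|E_G(X,Y)| ≤ |E_G'(A,B)| ≤ α₁ + α₂ + 2q'·|E_G(X,Y)| + 9n²`. -/
theorem reductionGraph_cut_count (n m : ℕ) (hn : 4 ≤ n) (G : SimpleGraph (Fin n))
    (hcubic : ∀ v : Fin n, (G.neighborSet v).ncard = 3)
    (ep1 ep2 : Fin m → Fin n) (hlt : ∀ j, ep1 j < ep2 j)
    (hedges : ∀ u v : Fin n,
      G.Adj u v ↔ ∃ j, (ep1 j = u ∧ ep2 j = v) ∨ (ep1 j = v ∧ ep2 j = u))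
    (hinj : Function.Injective fun j => (ep1 j, ep2 j))
    (p q p' q' : ℕ) (hp : 0 < p) (hq : 0 < q) (hp' : 0 < p') (hq' : 0 < q')
    (X Y : Set (Fin n)) (hXY : X ∪ Y = Set.univ) (hdXY : Disjoint X Y) :
    letI α₁ := n * (2*p*q + q^2 + 6*q + 3*(p+q)*(n-1))
    letI α₂ := m * (2*p'*q' + q'^2 + 2*p' + 2*(p'+q')*(m-1))
    letI A : Set (RVert n m p q p' q') := cutA ep1 ep2 X Y
    letI B : Set (RVert n m p q p' q') := cutA ep1 ep2 Y X
    α₁ + α₂ + 2*q'*(cutSize G X Y) ≤ cutSize (reductionGraph n m p q p' q' ep1 ep2) A B ∧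
      cutSize (reductionGraph n m p q p' q' ep1 ep2) A B ≤
        α₁ + α₂ + 2*q'*(cutSize G X Y) + 9*n^2 := by
  haveI : DecidablePred (· ∈ X) := Classical.decPred _
  haveI : DecidablePred (· ∈ Y) := Classical.decPred _
  haveI : DecidableRel G.Adj := Classical.decRel _
  have hmaster := master p q p' q' ep1 ep2 X Y G hn hcubic hlt hedges hinj hXY hdXY
  have hLLf : LLS p q p' q' ep1 ep2 X Y ≤ 9 * n^2 := by
    have h1 := LLS_le p q p' q' ep1 ep2 X Y G hcubic hlt hedges hinj
    have h2 := cardVP X Y hXY hdXY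
    zify at h1 h2 ⊢
    nlinarith [h1, h2, sq_nonneg ((cardV X : ℤ) - (cardV Y : ℤ))]
  show n * (2*p*q + q^2 + 6*q + 3*(p+q)*(n-1)) +
      m * (2*p'*q' + q'^2 + 2*p' + 2*(p'+q')*(m-1)) + 2*q'*(cutSize G X Y) ≤
        cutSize (reductionGraph n m p q p' q' ep1 ep2)
          (cutA ep1 ep2 X Y) (cutA ep1 ep2 Y X) ∧
      cutSize (reductionGraph n m p q p' q' ep1 ep2)
          (cutA ep1 ep2 X Y) (cutA ep1 ep2 Y X) ≤
        n * (2*p*q + q^2 + 6*q + 3*(p+q)*(n-1)) +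
          m * (2*p'*q' + q'^2 + 2*p' + 2*(p'+q')*(m-1)) + 2*q'*(cutSize G X Y) + 9*n^2
  constructor
  · rw [hmaster]
    exact Nat.le_add_right _ _
  · rw [hmaster]
    omega
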